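/- arXiv:0908.0685 — 5 statements merged into one kernel-verified Lean document; each statement's English description precedes it below -/
import Mathlib

section
/- Let X be a complete CAT(0) space. For every nonempty bounded subset Y of X there exists a unique point c in X (the circumcenter) such that Y is contained in the closed ball of radius r_Y about c, where r_Y is the infimum of radii r such that Y is contained in some closed ball of radius r. -/
open Metric Bornology

/-- CAT(0): midpoints exist and satisfy the Bruhat–Tits CN comparison inequality. -/
def IsCAT0 (X : Type*) [MetricSpace X] : Prop :=
  ∀ x y : X, ∃ m : X, dist x m = dist x y / 2 ∧ dist y m = dist x y / 2 ∧
    ∀ z : X, dist z m ^ 2 ≤ (dist z x ^ 2 + dist z y ^ 2) / 2 - dist x y ^ 2 / 4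

/-- Translation length of an isometry. -/
noncomputable def transLen {X : Type*} [MetricSpace X] (γ : X ≃ᵢ X) : ℝ :=
  ⨅ x, dist (γ x) x

/-- An isometry is semisimple if its displacement function attains its infimum. -/
def IsSemisimple {X : Type*} [MetricSpace X] (γ : X ≃ᵢ X) : Prop :=
  ∃ x : X, dist (γ x) x = transLen γ

/-- A metrically proper action by isometries. -/
def IsProperAction {G X : Type*} [Group G] [MetricSpace X] (ρ : G →* (X ≃ᵢ X)) : Prop :=
  ∀ B : Set X, IsBounded B → {g : G | ∃ b ∈ B, ρ g b ∈ B}.Finite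

/-- Covering dimension at most `n`: every open cover has an open refinement of
multiplicity at most `n + 1`. -/
def CovDimLE (X : Type*) [TopologicalSpace X] (n : ℕ) : Prop :=
  ∀ (ι : Type) (U : ι → Set X), (∀ i, IsOpen (U i)) → (⋃ i, U i) = Set.univ →
    ∃ (κ : Type) (V : κ → Set X), (∀ k, IsOpen (V k)) ∧ (⋃ k, V k) = Set.univ ∧
      (∀ k, ∃ i, V k ⊆ U i) ∧
      ∀ x : X, ∃ s : Finset κ, s.card ≤ n + 1 ∧ ∀ k, x ∈ V k → k ∈ s

/-- Convexity: a set containing every point lying between two of its points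
(in a CAT(0) space this is the geodesic segment). -/
def GeodConvex {X : Type*} [MetricSpace X] (C : Set X) : Prop :=
  ∀ x ∈ C, ∀ y ∈ C, ∀ z : X, dist x z + dist z y = dist x y → z ∈ C

/-- Circumcenter: every nonempty bounded subset of a complete CAT(0) space is
contained in a unique closed ball of the minimal radius `r_Y`. -/
theorem circumcenter_exists_unique {X : Type*} [MetricSpace X] [CompleteSpace X]
    (hX : IsCAT0 X) (Y : Set X) (hne : Y.Nonempty) (hbd : IsBounded Y) :
    ∃! c : X, Y ⊆ closedBall c (sInf {r : ℝ | 0 < r ∧ ∃ x : X, Y ⊆ closedBall x r}) := by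
  classical
  haveI : Nonempty Y := hne.to_subtype
  set S : Set ℝ := {r : ℝ | 0 < r ∧ ∃ x : X, Y ⊆ closedBall x r} with hS_def
  set r0 : ℝ := sInf S with hr0_def
  obtain ⟨y0, hy0⟩ := hne
  -- S nonempty and bounded below
  have hSbdd : BddBelow S := ⟨0, fun r hr => hr.1.le⟩
  have hSne : S.Nonempty := by
    obtain ⟨R, hR⟩ := hbd.subset_closedBall y0
    refine ⟨max R 1, by positivity, y0, hR.trans (closedBall_subset_closedBall (le_max_left _ _))⟩
  -- the radius function
  set f : X → ℝ := fun x => ⨆ y : Y, dist (y : X) x with hf_def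
  have hfbdd : ∀ x : X, BddAbove (Set.range fun y : Y => dist (y : X) x) := by
    intro x
    obtain ⟨R, hR⟩ := hbd.subset_closedBall x
    exact ⟨R, by rintro _ ⟨y, rfl⟩; exact hR y.2⟩
  have hdist_le : ∀ x : X, ∀ y ∈ Y, dist y x ≤ f x := fun x y hy =>
    le_ciSup (hfbdd x) ⟨y, hy⟩
  have hf_le : ∀ {x : X} {s : ℝ}, (∀ y ∈ Y, dist y x ≤ s) → f x ≤ s := fun h =>
    ciSup_le fun y => h y y.2
  have hf_nonneg : ∀ x : X, 0 ≤ f x := fun x => dist_nonneg.trans (hdist_le x y0 hy0)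
  have hsub : ∀ x : X, Y ⊆ closedBall x (f x) := fun x y hy => mem_closedBall.2 (hdist_le x y hy)
  have hf_of_sub : ∀ {x : X} {s : ℝ}, Y ⊆ closedBall x s → f x ≤ s := fun h =>
    hf_le fun y hy => mem_closedBall.1 (h hy)
  -- r0 is a lower bound for f
  have hr0_le : ∀ x : X, r0 ≤ f x := by
    intro x
    by_contra h
    push_neg at h
    obtain ⟨t, ht1, ht2⟩ := exists_between h
    have htS : t ∈ S := ⟨(hf_nonneg x).trans_lt ht1, x,
      (hsub x).trans (closedBall_subset_closedBall ht1.le)⟩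
    exact absurd (csInf_le hSbdd htS) (not_le.2 ht2)
  have hr0_nonneg : 0 ≤ r0 := le_csInf hSne fun r hr => hr.1.le
  -- CN inequality for f
  have hCN : ∀ x x' : X, ∃ m : X,
      f m ^ 2 ≤ (f x ^ 2 + f x' ^ 2) / 2 - dist x x' ^ 2 / 4 := by
    intro x x'
    obtain ⟨m, -, -, hm⟩ := hX x x'
    refine ⟨m, ?_⟩
    set B : ℝ := (f x ^ 2 + f x' ^ 2) / 2 - dist x x' ^ 2 / 4 with hB_def
    have hyB : ∀ y ∈ Y, dist y m ^ 2 ≤ B := by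
      intro y hy
      have h1 := hm y
      have h2 : dist y x ^ 2 ≤ f x ^ 2 :=
        pow_le_pow_left₀ dist_nonneg (hdist_le x y hy) 2
      have h3 : dist y x' ^ 2 ≤ f x' ^ 2 :=
        pow_le_pow_left₀ dist_nonneg (hdist_le x' y hy) 2
      show dist y m ^ 2 ≤ (f x ^ 2 + f x' ^ 2) / 2 - dist x x' ^ 2 / 4
      nlinarith
    have hB0 : 0 ≤ B := le_trans (by positivity) (hyB y0 hy0)
    have hfm : f m ≤ Real.sqrt B := hf_le fun y hy => by
      rw [show dist y m = Real.sqrt (dist y m ^ 2) by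
        rw [Real.sqrt_sq dist_nonneg]]
      exact Real.sqrt_le_sqrt (hyB y hy)
    calc f m ^ 2 ≤ Real.sqrt B ^ 2 := pow_le_pow_left₀ (hf_nonneg m) hfm 2
      _ = B := Real.sq_sqrt hB0
  -- key distance estimate
  have hkey : ∀ x x' : X, dist x x' ^ 2 ≤ 2 * f x ^ 2 + 2 * f x' ^ 2 - 4 * r0 ^ 2 := by
    intro x x'
    obtain ⟨m, hm⟩ := hCN x x'
    have h1 : r0 ^ 2 ≤ f m ^ 2 := pow_le_pow_left₀ hr0_nonneg (hr0_le m) 2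
    nlinarith
  -- minimizing sequence
  have hseq : ∀ n : ℕ, ∃ x : X, f x < r0 + 1 / (n + 1) := by
    intro n
    have h1 : r0 < r0 + 1 / ((n : ℝ) + 1) := by
      have : (0:ℝ) < 1 / ((n : ℝ) + 1) := by positivity
      linarith
    obtain ⟨s, hsS, hs⟩ := (csInf_lt_iff hSbdd hSne).1 h1
    obtain ⟨-, x, hx⟩ := hsS
    exact ⟨x, lt_of_le_of_lt (hf_of_sub hx) hs⟩
  choose u hu using hseq
  -- the sequence is Cauchy
  have hcau : CauchySeq u := by
    rw [Metric.cauchySeq_iff']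
    intro ε hε
    obtain ⟨N, hN⟩ := exists_nat_one_div_lt (show (0:ℝ) < ε ^ 2 / (8 * r0 + 5) by positivity)
    refine ⟨N, fun n hn => ?_⟩
    set δ : ℝ := 1 / ((N : ℝ) + 1) with hδ_def
    have hδpos : 0 < δ := by positivity
    have hδ1 : δ ≤ 1 := by
      rw [hδ_def]
      rw [div_le_one (by positivity)]
      have : (0:ℝ) ≤ (N : ℝ) := Nat.cast_nonneg N
      linarith
    have hδε : δ < ε ^ 2 / (8 * r0 + 5) := hN
    have hfn : f (u n) < r0 + δ := by
      refine lt_of_lt_of_le (hu n) ?_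
      have h1 : (1:ℝ) / ((n : ℝ) + 1) ≤ δ :=
        one_div_le_one_div_of_le (by positivity)
          (by have := (Nat.cast_le (α := ℝ)).2 hn; linarith)
      linarith
    have hfN : f (u N) < r0 + δ := hu N
    have h2 := hkey (u n) (u N)
    have hd2 : dist (u n) (u N) ^ 2 < ε ^ 2 := by
      have hfn2 : f (u n) ^ 2 ≤ (r0 + δ) ^ 2 :=
        pow_le_pow_left₀ (hf_nonneg _) hfn.le 2
      have hfN2 : f (u N) ^ 2 ≤ (r0 + δ) ^ 2 :=
        pow_le_pow_left₀ (hf_nonneg _) hfN.le 2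
      have hb : 8 * r0 * δ + 4 * δ ^ 2 ≤ (8 * r0 + 4) * δ := by nlinarith
      have hc : (8 * r0 + 4) * δ < ε ^ 2 := by
        have h5 : δ * (8 * r0 + 5) < ε ^ 2 :=
          (lt_div_iff₀ (show (0:ℝ) < 8 * r0 + 5 by linarith)).1 hδε
        nlinarith
      nlinarith
    nlinarith [dist_nonneg (x := u n) (y := u N)]
  obtain ⟨c, hc⟩ := cauchySeq_tendsto_of_complete hcau
  -- f c ≤ r0
  have hfc : f c ≤ r0 := by
    refine hf_le fun y hy => le_of_forall_pos_le_add fun ε hε => ?_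
    obtain ⟨N1, hN1⟩ := (Metric.tendsto_atTop.1 hc) (ε / 2) (by positivity)
    obtain ⟨N2, hN2⟩ := exists_nat_one_div_lt (show (0:ℝ) < ε / 2 by positivity)
    set n := max N1 N2
    have h1 : dist (u n) c < ε / 2 := hN1 n (le_max_left _ _)
    have h2 : (1:ℝ) / ((n : ℝ) + 1) < ε / 2 :=
      lt_of_le_of_lt (one_div_le_one_div_of_le (by positivity)
        (by have := (Nat.cast_le (α := ℝ)).2 (le_max_right N1 N2); linarith)) hN2
    have h3 : dist y c ≤ dist y (u n) + dist (u n) c := dist_triangle _ _ _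
    have h4 : dist y (u n) ≤ f (u n) := hdist_le _ y hy
    have h5 := hu n
    linarith
  refine ⟨c, fun y hy => mem_closedBall.2 ((hdist_le c y hy).trans hfc), ?_⟩
  -- uniqueness
  intro c' hc'
  have hfc' : f c' ≤ r0 := hf_of_sub hc'
  obtain ⟨m, hm⟩ := hCN c' c
  have h1 : r0 ≤ f m := hr0_le m
  have h2 : r0 ^ 2 ≤ f m ^ 2 := pow_le_pow_left₀ hr0_nonneg h1 2
  have h3 : f c' ^ 2 ≤ r0 ^ 2 := pow_le_pow_left₀ (hf_nonneg _) hfc' 2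
  have h4 : f c ^ 2 ≤ r0 ^ 2 := pow_le_pow_left₀ (hf_nonneg _) hfc 2
  have hd : dist c' c ^ 2 ≤ 0 := by nlinarith
  have : dist c' c = 0 := by nlinarith [dist_nonneg (x := c') (y := c)]
  exact dist_eq_zero.1 this
end

section
/- Let X be a complete CAT(0) space and let H1, H2 be commuting subgroups of Isom(X) (every element of H1 commutes with every element of H2). If Fix(H1) and Fix(H2) are both nonempty, then Fix(H1) ∩ Fix(H2) is nonempty. -/
open Metric Bornology

open Filter Topology in
lemma circumcenter_fixed {X : Type*} [MetricSpace X] [CompleteSpace X]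
    (hX : IsCAT0 X) {S : Set X} (hne : S.Nonempty) (hb : IsBounded S) :
    ∃ c : X, ∀ g : X ≃ᵢ X, g '' S = S → g c = c := by
  have hXne : Nonempty X := ⟨hne.some⟩
  set rad : X → ℝ := fun x => sSup ((dist x) '' S) with hrad
  have bdd : ∀ x : X, BddAbove ((dist x) '' S) := by
    intro x
    obtain ⟨r, hr⟩ := hb.subset_closedBall x
    refine ⟨r, ?_⟩
    rintro _ ⟨s, hs, rfl⟩
    simpa [dist_comm] using hr hs
  have hle : ∀ x, ∀ s ∈ S, dist x s ≤ rad x := fun x s hs => le_csSup (bdd x) ⟨s, hs, rfl⟩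
  have hub : ∀ x r, (∀ s ∈ S, dist x s ≤ r) → rad x ≤ r := by
    intro x r h
    exact csSup_le (hne.image _) (by rintro _ ⟨s, hs, rfl⟩; exact h s hs)
  obtain ⟨s₀, hs₀⟩ := hne
  have hnonneg : ∀ x, 0 ≤ rad x := fun x => le_trans dist_nonneg (hle x s₀ hs₀)
  have bddb : BddBelow (Set.range rad) := ⟨0, by rintro _ ⟨x, rfl⟩; exact hnonneg x⟩
  set r₀ : ℝ := ⨅ x, rad x with hr₀
  have hr₀le : ∀ x, r₀ ≤ rad x := fun x => ciInf_le bddb x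
  have hr₀nonneg : 0 ≤ r₀ := le_ciInf hnonneg
  have key : ∀ x y : X, dist x y ^ 2 ≤ 2 * (rad x ^ 2 + rad y ^ 2) - 4 * r₀ ^ 2 := by
    intro x y
    obtain ⟨m, hmx, hmy, hcn⟩ := hX x y
    set R : ℝ := (rad x ^ 2 + rad y ^ 2) / 2 - dist x y ^ 2 / 4 with hR
    have hmR : ∀ s ∈ S, dist m s ^ 2 ≤ R := by
      intro s hs
      have h1 := hcn s
      have h2 : dist s x ≤ rad x := by rw [dist_comm]; exact hle x s hs
      have h3 : dist s y ≤ rad y := by rw [dist_comm]; exact hle y s hs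
      have h4 : (0:ℝ) ≤ dist s x := dist_nonneg
      have h5 : (0:ℝ) ≤ dist s y := dist_nonneg
      rw [dist_comm m s, hR]
      nlinarith
    have hRnn : 0 ≤ R := le_trans (sq_nonneg _) (hmR s₀ hs₀)
    have hradm : rad m ≤ Real.sqrt R := by
      refine hub m _ fun s hs => ?_
      have h6 := hmR s hs
      nlinarith [Real.sq_sqrt hRnn, Real.sqrt_nonneg R, dist_nonneg (x := m) (y := s)]
    have h7 : r₀ ^ 2 ≤ R := by
      have h1 : r₀ ≤ Real.sqrt R := le_trans (hr₀le m) hradm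
      nlinarith [Real.sq_sqrt hRnn]
    rw [hR] at h7
    linarith
  have hex : ∀ n : ℕ, ∃ x : X, rad x < r₀ + 1 / (n + 1) := by
    intro n
    apply exists_lt_of_ciInf_lt
    have h8 : (0:ℝ) < 1 / (n + 1) := by positivity
    rw [← hr₀]; linarith
  choose u hu using hex
  have hcauchy : CauchySeq u := by
    rw [Metric.cauchySeq_iff]
    intro ε hε
    have h1 : Tendsto (fun n : ℕ => (1:ℝ) / (n + 1)) atTop (𝓝 0) :=
      tendsto_one_div_add_atTop_nhds_zero_nat
    have h3 : Tendsto (fun n : ℕ => r₀ + 1 / (n + 1)) atTop (𝓝 r₀) := by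
      simpa using tendsto_const_nhds.add h1
    have h2 : Tendsto (fun n : ℕ => 4 * (r₀ + 1 / (n + 1)) ^ 2 - 4 * r₀ ^ 2) atTop (𝓝 0) := by
      have h4 := ((tendsto_const_nhds (x := (4:ℝ))).mul ((h3.mul h3))).sub
        (tendsto_const_nhds (x := 4 * r₀ ^ 2))
      have h5 : 4 * (r₀ * r₀) - 4 * r₀ ^ 2 = 0 := by ring
      rw [h5] at h4
      convert h4 using 2 with n
      ring
    have h6 : ∀ᶠ n : ℕ in atTop, 4 * (r₀ + 1 / (n + 1)) ^ 2 - 4 * r₀ ^ 2 < ε ^ 2 :=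
      h2.eventually (eventually_lt_nhds (pow_pos hε 2))
    obtain ⟨N, hN⟩ := eventually_atTop.mp h6
    refine ⟨N, fun m hm n hn => ?_⟩
    have hmono : ∀ k : ℕ, N ≤ k → (1:ℝ) / (k + 1) ≤ 1 / (N + 1) := by
      intro k hk
      apply one_div_le_one_div_of_le (by positivity)
      have : (N:ℝ) ≤ k := by exact_mod_cast hk
      linarith
    have hm1 : rad (u m) < r₀ + 1 / (N + 1) := lt_of_lt_of_le (hu m) (by linarith [hmono m hm])
    have hn1 : rad (u n) < r₀ + 1 / (N + 1) := lt_of_lt_of_le (hu n) (by linarith [hmono n hn])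
    have hk := key (u m) (u n)
    have hNN := hN N le_rfl
    have hd0 : (0:ℝ) ≤ dist (u m) (u n) := dist_nonneg
    nlinarith [hnonneg (u m), hnonneg (u n), hr₀nonneg]
  obtain ⟨c, hc⟩ := cauchySeq_tendsto_of_complete hcauchy
  have hradc : rad c = r₀ := by
    refine le_antisymm ?_ (hr₀le c)
    refine le_of_forall_pos_le_add fun η hη => ?_
    obtain ⟨n₁, hn₁⟩ := exists_nat_one_div_lt (half_pos hη)
    obtain ⟨n₂, hn₂⟩ := Metric.tendsto_atTop.mp hc (η / 2) (half_pos hη)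
    set n := max n₁ n₂ with hn
    have hd : dist (u n) c < η / 2 := hn₂ n (le_max_right _ _)
    have h1n : 1 / ((n:ℝ) + 1) < η / 2 := by
      refine lt_of_le_of_lt ?_ hn₁
      apply one_div_le_one_div_of_le (by positivity)
      have : (n₁:ℝ) ≤ n := by exact_mod_cast le_max_left n₁ n₂
      linarith
    have h2 : rad c ≤ rad (u n) + dist c (u n) := by
      refine hub c _ fun s hs => ?_
      calc dist c s ≤ dist c (u n) + dist (u n) s := dist_triangle _ _ _
        _ ≤ dist c (u n) + rad (u n) := by linarith [hle (u n) s hs]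
        _ = rad (u n) + dist c (u n) := by ring
    have h3 := hu n
    rw [dist_comm] at hd
    linarith
  refine ⟨c, fun g hg => ?_⟩
  have himg : (dist (g c)) '' S = (dist c) '' S := by
    conv_lhs => rw [← hg, ← Set.image_comp]
    funext s
    simp [Function.comp, g.dist_eq]
  have hradgc : rad (g c) = r₀ := by
    rw [← hradc]
    simp only [hrad]
    rw [himg]
  have h9 := key (g c) c
  rw [hradgc, hradc] at h9
  have : dist (g c) c = 0 := by nlinarith [dist_nonneg (x := g c) (y := c)]
  exact dist_eq_zero.mp this

/-- Commuting subgroups of isometries of a complete CAT(0) space with nonempty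
fixed-point sets have a common fixed point. -/
theorem commuting_fixed_points {X : Type*} [MetricSpace X] [CompleteSpace X]
    (hX : IsCAT0 X) (H₁ H₂ : Subgroup (X ≃ᵢ X))
    (hcomm : ∀ h₁ ∈ H₁, ∀ h₂ ∈ H₂, h₁ * h₂ = h₂ * h₁)
    (hf₁ : ∃ x : X, ∀ h ∈ H₁, h x = x) (hf₂ : ∃ x : X, ∀ h ∈ H₂, h x = x) :
    ∃ x : X, (∀ h ∈ H₁, h x = x) ∧ (∀ h ∈ H₂, h x = x) := by
  obtain ⟨x₁, hx₁⟩ := hf₁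
  obtain ⟨x₂, hx₂⟩ := hf₂
  set S : Set X := (fun h : X ≃ᵢ X => h x₂) '' (H₁ : Set (X ≃ᵢ X)) with hS
  have hmul : ∀ (a b : X ≃ᵢ X) (x : X), (a * b) x = a (b x) := fun a b x => rfl
  have hne : S.Nonempty := ⟨x₂, 1, H₁.one_mem, rfl⟩
  have hb : IsBounded S := by
    apply (isBounded_closedBall (x := x₁) (r := dist x₂ x₁)).subset
    rintro _ ⟨h, hh, rfl⟩
    have h1 : h x₁ = x₁ := hx₁ h hh
    have : dist (h x₂) x₁ = dist x₂ x₁ := by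
      conv_lhs => rw [← h1]
      exact h.dist_eq _ _
    simp [Metric.mem_closedBall, this]
  obtain ⟨c, hc⟩ := circumcenter_fixed hX hne hb
  have hfix1 : ∀ h ∈ H₁, h c = c := by
    intro h hh
    apply hc
    ext y
    constructor
    · rintro ⟨_, ⟨k, hk, rfl⟩, rfl⟩
      exact ⟨h * k, H₁.mul_mem hh hk, rfl⟩
    · rintro ⟨k, hk, rfl⟩
      refine ⟨(h⁻¹ * k) x₂, ⟨h⁻¹ * k, H₁.mul_mem (H₁.inv_mem hh) hk, rfl⟩, ?_⟩
      rw [← hmul h (h⁻¹ * k) x₂, ← mul_assoc, mul_inv_cancel, one_mul]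
  have hfix2 : ∀ h ∈ H₂, h c = c := by
    intro h hh
    apply hc
    have hfixS : ∀ s ∈ S, h s = s := by
      rintro _ ⟨k, hk, rfl⟩
      have hck := hcomm k hk h hh
      calc h (k x₂) = (h * k) x₂ := rfl
        _ = (k * h) x₂ := by rw [← hck]
        _ = k (h x₂) := rfl
        _ = k x₂ := by rw [hx₂ h hh]
    ext y
    constructor
    · rintro ⟨s, hs, rfl⟩
      rw [hfixS s hs]; exact hs
    · intro hy
      exact ⟨y, hy, hfixS y hy⟩
  exact ⟨c, hfix1, hfix2⟩
end

section
/- Let X be a complete CAT(0) space and let H1, …, Hℓ be pairwise commuting subgroups of Isom(X). If each Fix(Hi) is nonempty, then the intersection of all the Fix(Hi) is nonempty. -/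
open Metric Bornology

lemma cat0_between_unique {X : Type*} [MetricSpace X] (hX : IsCAT0 X) {x y z z' : X}
    (h1 : dist x z + dist z y = dist x y) (h2 : dist x z' + dist z' y = dist x y)
    (h3 : dist x z = dist x z') : z = z' := by
  obtain ⟨m, hm1, hm2, hm3⟩ := hX z z'
  have c1 := hm3 x
  have c2 := hm3 y
  have t := dist_triangle x m y
  by_contra hne
  have hd : 0 < dist z z' := dist_pos.2 hne
  rw [dist_comm y z, dist_comm y z'] at c2
  have h4 : dist z y = dist z' y := by linarith
  have hxm : dist x m < dist x z := by
    nlinarith [dist_nonneg (x := x) (y := m), dist_nonneg (x := x) (y := z)]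
  have hym : dist m y < dist z y := by
    rw [dist_comm m y]
    nlinarith [dist_nonneg (x := y) (y := m), dist_nonneg (x := z) (y := y)]
  linarith

lemma proj_unique {X : Type*} [MetricSpace X] (hX : IsCAT0 X) {C : Set X}
    (hcv : GeodConvex C) {y p q : X} (hp : p ∈ C) (hq : q ∈ C)
    (hmin : ∀ c ∈ C, dist y p ≤ dist y c) (hqd : dist y q ≤ dist y p) : q = p := by
  have heq : dist y q = dist y p := le_antisymm hqd (hmin q hq)
  obtain ⟨m, hm1, hm2, hm3⟩ := hX p q
  have hmC : m ∈ C := hcv p hp q hq m (by rw [dist_comm q m] at hm2; linarith)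
  have c1 := hm3 y
  have h2 := hmin m hmC
  have hsq : dist y p ^ 2 ≤ dist y m ^ 2 := pow_le_pow_left₀ dist_nonneg h2 2
  rw [heq] at c1
  have h0 : dist p q ^ 2 = 0 := le_antisymm (by linarith) (sq_nonneg _)
  have : dist p q = 0 := by
    have := pow_eq_zero_iff (n := 2) (by norm_num) |>.1 h0
    exact this
  exact (dist_eq_zero.1 this).symm

lemma exists_proj {X : Type*} [MetricSpace X] [CompleteSpace X] (hX : IsCAT0 X) {C : Set X}
    (hcl : IsClosed C) (hcv : GeodConvex C) (hne : C.Nonempty) (y : X) :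
    ∃ p ∈ C, ∀ c ∈ C, dist y p ≤ dist y c := by
  set d := Metric.infDist y C with hdd
  have hd0 : 0 ≤ d := Metric.infDist_nonneg
  have hsel : ∀ n : ℕ, ∃ c ∈ C, dist y c < d + 1 / (n + 1) := by
    intro n
    have hlt : Metric.infDist y C < d + 1 / (n + 1) := by
      have : (0:ℝ) < 1 / (n + 1) := by positivity
      linarith
    exact (Metric.infDist_lt_iff hne).1 hlt
  choose c hcC hcd using hsel
  have key : ∀ n m : ℕ, dist (c n) (c m) ^ 2 ≤
      2 * dist y (c n) ^ 2 + 2 * dist y (c m) ^ 2 - 4 * d ^ 2 := by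
    intro n m
    obtain ⟨mid, hm1, hm2, hm3⟩ := hX (c n) (c m)
    have hmidC : mid ∈ C := hcv _ (hcC n) _ (hcC m) mid
      (by rw [dist_comm mid (c m)]; linarith)
    have hCN := hm3 y
    have hdm : d ≤ dist y mid := Metric.infDist_le_dist_of_mem hmidC
    nlinarith [dist_nonneg (x := y) (y := mid)]
  have hb : ∀ N n m : ℕ, N ≤ n → N ≤ m →
      dist (c n) (c m) ≤ Real.sqrt (4 * ((d + 1 / (N + 1)) ^ 2 - d ^ 2)) := by
    intro N n m hn hm
    have h1 : (1:ℝ) / (n + 1) ≤ 1 / (N + 1) := by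
      apply one_div_le_one_div_of_le (by positivity)
      exact_mod_cast by omega
    have h2 : (1:ℝ) / (m + 1) ≤ 1 / (N + 1) := by
      apply one_div_le_one_div_of_le (by positivity)
      exact_mod_cast by omega
    have hdn : dist y (c n) < d + 1 / (N + 1) := lt_of_lt_of_le (hcd n) (by linarith)
    have hdm : dist y (c m) < d + 1 / (N + 1) := lt_of_lt_of_le (hcd m) (by linarith)
    have hsq : dist (c n) (c m) ^ 2 ≤ 4 * ((d + 1 / (N + 1)) ^ 2 - d ^ 2) := by
      have := key n m
      nlinarith [dist_nonneg (x := y) (y := c n), dist_nonneg (x := y) (y := c m)]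
    calc dist (c n) (c m) = Real.sqrt (dist (c n) (c m) ^ 2) :=
          (Real.sqrt_sq dist_nonneg).symm
      _ ≤ _ := Real.sqrt_le_sqrt hsq
  have hb0 : Filter.Tendsto (fun N : ℕ => Real.sqrt (4 * ((d + 1 / (N + 1)) ^ 2 - d ^ 2)))
      Filter.atTop (nhds 0) := by
    have h1 : Filter.Tendsto (fun N : ℕ => (1:ℝ) / (N + 1)) Filter.atTop (nhds 0) :=
      tendsto_one_div_add_atTop_nhds_zero_nat
    have h2 : Filter.Tendsto (fun N : ℕ => 4 * ((d + 1 / (N + 1)) ^ 2 - d ^ 2))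
        Filter.atTop (nhds 0) := by
      have := ((h1.const_add d).pow 2).sub_const (d ^ 2)
      have h3 := this.const_mul 4
      simpa using h3
    have h4 := (Real.continuous_sqrt.tendsto 0).comp h2
    rw [Real.sqrt_zero] at h4
    exact h4
  have hcauchy : CauchySeq c := cauchySeq_of_le_tendsto_0 _ (fun n m N hn hm => hb N n m hn hm) hb0
  obtain ⟨p, hp⟩ := cauchySeq_tendsto_of_complete hcauchy
  have hpC : p ∈ C := hcl.mem_of_tendsto hp (Filter.Eventually.of_forall hcC)
  have hdist : Filter.Tendsto (fun n => dist y (c n)) Filter.atTop (nhds (dist y p)) :=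
    (Filter.Tendsto.dist tendsto_const_nhds hp)
  have hpd : dist y p ≤ d := by
    have hg : Filter.Tendsto (fun n : ℕ => d + 1 / (n + 1)) Filter.atTop (nhds d) := by
      simpa using (tendsto_one_div_add_atTop_nhds_zero_nat.const_add d)
    exact le_of_tendsto_of_tendsto' hdist hg fun n => (hcd n).le
  exact ⟨p, hpC, fun c' hc' => hpd.trans (Metric.infDist_le_dist_of_mem hc')⟩

/-- Finitely many pairwise commuting subgroups of isometries of a complete CAT(0)
space, each with a fixed point, have a common fixed point. -/
theorem commuting_fixed_points_finite {X : Type*} [MetricSpace X] [CompleteSpace X]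
    [Nonempty X] (hX : IsCAT0 X) {ι : Type*} [Finite ι] (H : ι → Subgroup (X ≃ᵢ X))
    (hcomm : ∀ i j, i ≠ j → ∀ h₁ ∈ H i, ∀ h₂ ∈ H j, h₁ * h₂ = h₂ * h₁)
    (hfix : ∀ i, ∃ x : X, ∀ h ∈ H i, h x = x) :
    ∃ x : X, ∀ i, ∀ h ∈ H i, h x = x := by
  classical
  have : Fintype ι := Fintype.ofFinite ι
  have key : ∀ s : Finset ι, ∃ x : X, ∀ i ∈ s, ∀ h ∈ H i, h x = x := by
    intro s
    induction s using Finset.induction_on with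
    | empty => exact ⟨Classical.arbitrary X, by simp⟩
    | @insert a s ha ih =>
      obtain ⟨x₀, hx₀⟩ := ih
      set C : Set X := {x | ∀ i ∈ s, ∀ h ∈ H i, h x = x} with hCdef
      have hcl : IsClosed C := by
        have hCeq : C = ⋂ i ∈ s, ⋂ h ∈ (H i : Set (X ≃ᵢ X)), {x | h x = x} := by
          ext x
          simp [hCdef]
        rw [hCeq]
        exact isClosed_biInter fun i _ => isClosed_biInter fun h _ =>
          isClosed_eq h.continuous continuous_id
      have hcv : GeodConvex C := by
        intro u hu v hv z hz i hi h hh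
        have e1 : dist u (h z) + dist (h z) v = dist u v := by
          rw [← hu i hi h hh, ← hv i hi h hh, h.dist_eq, h.dist_eq, h.dist_eq]
          exact hz
        have e2 : dist u (h z) = dist u z := by
          conv_lhs => rw [← hu i hi h hh]
          exact h.dist_eq u z
        exact cat0_between_unique hX e1 hz e2
      have hne : C.Nonempty := ⟨x₀, hx₀⟩
      obtain ⟨y, hy⟩ := hfix a
      obtain ⟨p, hpC, hpmin⟩ := exists_proj hX hcl hcv hne y
      refine ⟨p, fun i hi h hh => ?_⟩
      rcases Finset.mem_insert.1 hi with rfl | hi'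
      · have hhpC : h p ∈ C := by
          intro j hj g hg
          have hne' : j ≠ i := fun e => ha (e ▸ hj)
          have hcm := hcomm j i hne' g hg h hh
          have : g (h p) = (g * h) p := rfl
          rw [this, hcm]
          show h (g p) = h p
          rw [hpC j hj g hg]
        have hdist : dist y (h p) ≤ dist y p := by
          conv_lhs => rw [← hy h hh]
          rw [h.dist_eq]
        exact proj_unique hX hcv hpC hhpC hpmin hdist
      · exact hpC i hi' h hh
  obtain ⟨x, hx⟩ := key Finset.univ
  exact ⟨x, fun i => hx i (Finset.mem_univ i)⟩
end

section
/- Let X be a metric space and let a group G act by isometries on the n-fold product Xⁿ (with the product metric) by permuting coordinates and acting in each factor, such that some power of each g ∈ G preserves the factors. If for each g the restriction of a suitable power of g to each factor is a semisimple isometry of X, and X is complete CAT(0), then g acts as a semisimple isometry of Xⁿ. -/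
open Metric Bornology

set_option linter.unusedSectionVars false
set_option maxHeartbeats 1600000

open Filter

section CAT0Aux

lemma rle_of_sq_le_sq {a b : ℝ} (ha : 0 ≤ a) (hb : 0 ≤ b) (h : a ^ 2 ≤ b ^ 2) : a ≤ b := by
  calc a = Real.sqrt (a ^ 2) := (Real.sqrt_sq ha).symm
    _ ≤ Real.sqrt (b ^ 2) := Real.sqrt_le_sqrt h
    _ = b := Real.sqrt_sq hb

variable {E : Type*} [MetricSpace E]

noncomputable def cmid (hE : IsCAT0 E) (x y : E) : E := (hE x y).choose

lemma cmid_dist₁ (hE : IsCAT0 E) (x y : E) : dist x (cmid hE x y) = dist x y / 2 :=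
  (hE x y).choose_spec.1

lemma cmid_dist₂ (hE : IsCAT0 E) (x y : E) : dist y (cmid hE x y) = dist x y / 2 :=
  (hE x y).choose_spec.2.1

lemma cmid_cn (hE : IsCAT0 E) (x y z : E) :
    dist z (cmid hE x y) ^ 2 ≤ (dist z x ^ 2 + dist z y ^ 2) / 2 - dist x y ^ 2 / 4 :=
  (hE x y).choose_spec.2.2 z

lemma midpoint_eq_cmid (hE : IsCAT0 E) {x y m : E}
    (h1 : dist x m = dist x y / 2) (h2 : dist y m = dist x y / 2) : m = cmid hE x y := by
  have h := cmid_cn hE x y m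
  rw [dist_comm m x, dist_comm m y, h1, h2] at h
  have : dist m (cmid hE x y) = 0 := by
    nlinarith [dist_nonneg (x := m) (y := cmid hE x y)]
  exact dist_eq_zero.mp this

lemma cat0_midpoint_unique (hE : IsCAT0 E) {x y m m' : E}
    (h1 : dist x m = dist x y / 2) (h2 : dist y m = dist x y / 2)
    (h1' : dist x m' = dist x y / 2) (h2' : dist y m' = dist x y / 2) : m = m' := by
  rw [midpoint_eq_cmid hE h1 h2, midpoint_eq_cmid hE h1' h2']

lemma cmid_comm (hE : IsCAT0 E) (x y : E) : cmid hE x y = cmid hE y x := by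
  refine midpoint_eq_cmid hE ?_ ?_
  · rw [cmid_dist₂ hE x y, dist_comm y x]
  · rw [cmid_dist₁ hE x y, dist_comm y x]

lemma isometryEquiv_cmid (hE : IsCAT0 E) (e : E ≃ᵢ E) (x y : E) :
    e (cmid hE x y) = cmid hE (e x) (e y) := by
  refine midpoint_eq_cmid hE ?_ ?_
  · rw [e.dist_eq, e.dist_eq]; exact cmid_dist₁ hE x y
  · rw [e.dist_eq, e.dist_eq]; exact cmid_dist₂ hE x y

lemma cmid_contract₁ (hE : IsCAT0 E) (x y y' : E) :
    dist (cmid hE x y) (cmid hE x y') ≤ dist y y' / 2 := by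
  set m := cmid hE x y
  set m' := cmid hE x y'
  have h1 : dist y m' ^ 2 ≤ (dist y x ^ 2 + dist y y' ^ 2) / 2 - dist x y' ^ 2 / 4 :=
    cmid_cn hE x y' y
  have h2 : dist m' m ^ 2 ≤ (dist m' x ^ 2 + dist m' y ^ 2) / 2 - dist x y ^ 2 / 4 :=
    cmid_cn hE x y m'
  have e1 : dist m' x = dist x y' / 2 := by rw [dist_comm]; exact cmid_dist₁ hE x y'
  have e2 : dist m' y = dist y m' := dist_comm _ _
  have e3 : dist y x = dist x y := dist_comm _ _
  rw [e1, e2] at h2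
  rw [e3] at h1
  rw [dist_comm m m'] at *
  have hd : dist m' m ^ 2 ≤ (dist y y' / 2) ^ 2 := by nlinarith
  exact rle_of_sq_le_sq dist_nonneg (by positivity) hd

lemma cmid_contract (hE : IsCAT0 E) (x y x' y' : E) :
    dist (cmid hE x y) (cmid hE x' y') ≤ (dist x x' + dist y y') / 2 := by
  have t1 := cmid_contract₁ hE x y y'
  have t2 : dist (cmid hE x y') (cmid hE x' y') ≤ dist x x' / 2 := by
    rw [cmid_comm hE x y', cmid_comm hE x' y']
    exact cmid_contract₁ hE y' x x'
  calc dist (cmid hE x y) (cmid hE x' y')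
      ≤ dist (cmid hE x y) (cmid hE x y') + dist (cmid hE x y') (cmid hE x' y') :=
        dist_triangle _ _ _
    _ ≤ (dist x x' + dist y y') / 2 := by linarith

lemma dyadicDense (S : Set ℝ)
    (h0 : (0:ℝ) ∈ S) (h1 : (1:ℝ) ∈ S)
    (hmid : ∀ a ∈ S ∩ Set.Icc (0:ℝ) 1, ∀ b ∈ S ∩ Set.Icc (0:ℝ) 1, (a + b) / 2 ∈ S)
    (hseq : ∀ a ∈ Set.Icc (0:ℝ) 1, ∀ u : ℕ → ℝ, (∀ n, u n ∈ S ∩ Set.Icc 0 1) →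
      Tendsto u atTop (nhds a) → a ∈ S) :
    Set.Icc (0:ℝ) 1 ⊆ S := by
  have hdy : ∀ n : ℕ, ∀ i : ℕ, i ≤ 2 ^ n → ((i : ℝ) / 2 ^ n) ∈ S ∩ Set.Icc (0:ℝ) 1 := by
    intro n
    induction n with
    | zero =>
      intro i hi
      interval_cases i
      · exact ⟨by simpa using h0, by norm_num⟩
      · exact ⟨by simpa using h1, by norm_num⟩
    | succ n ih =>
      intro i hi
      have hIcc : ((i : ℝ) / 2 ^ (n+1)) ∈ Set.Icc (0:ℝ) 1 := by
        constructor
        · positivity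
        · rw [div_le_one (by positivity)]
          calc (i : ℝ) ≤ ((2 ^ (n+1) : ℕ) : ℝ) := by exact_mod_cast hi
            _ = 2 ^ (n+1) := by push_cast; ring
      refine ⟨?_, hIcc⟩
      rcases Nat.even_or_odd i with ⟨j, hj⟩ | ⟨j, hj⟩
      · have hj' : j ≤ 2 ^ n := by omega
        have : ((i : ℝ) / 2 ^ (n+1)) = (j : ℝ) / 2 ^ n := by
          subst hj; push_cast; ring
        rw [this]
        exact (ih j hj').1
      · have hj1 : j + 1 ≤ 2 ^ n := by omega
        have hj' : j ≤ 2 ^ n := by omega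
        have : ((i : ℝ) / 2 ^ (n+1)) = ((j : ℝ) / 2 ^ n + ((j:ℝ)+1) / 2 ^ n) / 2 := by
          subst hj; push_cast; ring
        rw [this]
        have h2 := ih (j+1) hj1
        push_cast at h2
        exact hmid _ (ih j hj') _ h2
  intro a ha
  set u : ℕ → ℝ := fun n => ((⌊a * 2 ^ n⌋₊ : ℝ) / 2 ^ n) with hu
  have hmem : ∀ n, u n ∈ S ∩ Set.Icc 0 1 := by
    intro n
    apply hdy
    have : a * 2 ^ n ≤ ((2 ^ n : ℕ) : ℝ) := by
      push_cast
      nlinarith [ha.2, pow_pos (by norm_num : (0:ℝ) < 2) n]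
    calc ⌊a * 2 ^ n⌋₊ ≤ ⌊((2 ^ n : ℕ) : ℝ)⌋₊ := Nat.floor_le_floor (by exact_mod_cast this)
      _ = 2 ^ n := Nat.floor_natCast _
  have htend : Tendsto u atTop (nhds a) := by
    rw [Metric.tendsto_atTop]
    intro ε hε
    obtain ⟨N, hN⟩ := exists_pow_lt_of_lt_one hε (by norm_num : (1:ℝ)/2 < 1)
    refine ⟨N, fun n hn => ?_⟩
    have hpos : (0:ℝ) < 2 ^ n := by positivity
    have hle : u n ≤ a := by
      rw [hu]
      rw [div_le_iff₀ hpos]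
      exact Nat.floor_le (by nlinarith [ha.1])
    have hlt : a - u n < 1 / 2 ^ n := by
      rw [hu]
      have := Nat.lt_floor_add_one (a * 2 ^ n)
      rw [sub_lt_iff_lt_add]
      rw [← add_div, lt_div_iff₀ hpos]  -- a * 2^n < (1 + ⌊⌋)
      linarith
    have h2 : (1:ℝ) / 2 ^ n ≤ (1/2) ^ N := by
      rw [one_div_pow]
      exact one_div_le_one_div_of_le (by positivity) (pow_le_pow_right₀ (by norm_num) hn)
    rw [Real.dist_eq, abs_sub_comm, abs_of_nonneg (by linarith)]
    calc a - u n < 1 / 2 ^ n := hlt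
      _ ≤ (1/2) ^ N := h2
      _ < ε := hN
  exact hseq a ha u hmem htend

variable {E : Type*} [MetricSpace E]

noncomputable def geoSeq (m : E → E → E) (x y : E) : ℕ → ℕ → E
  | 0 => fun i => if i = 0 then x else y
  | (n+1) => fun i =>
      if i % 2 = 0 then geoSeq m x y n (i / 2)
      else m (geoSeq m x y n (i / 2)) (geoSeq m x y n (i / 2 + 1))

variable (m : E → E → E) (x y : E)

lemma geoSeq_even (n i : ℕ) : geoSeq m x y (n+1) (2*i) = geoSeq m x y n i := by
  simp [geoSeq, Nat.mul_mod_right, Nat.mul_div_cancel_left _ (by norm_num : 0 < 2)]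

lemma geoSeq_odd (n i : ℕ) :
    geoSeq m x y (n+1) (2*i+1) = m (geoSeq m x y n i) (geoSeq m x y n (i+1)) := by
  have h1 : (2*i+1) % 2 = 1 := by omega
  have h2 : (2*i+1) / 2 = i := by omega
  simp [geoSeq, h1, h2]

lemma geoSeq_zero (n : ℕ) : geoSeq m x y n 0 = x := by
  induction n with
  | zero => simp [geoSeq]
  | succ n ih => simpa [geoSeq] using ih

lemma geoSeq_last (n : ℕ) : geoSeq m x y n (2^n) = y := by
  induction n with
  | zero => simp [geoSeq]
  | succ n ih => rw [pow_succ, mul_comm, geoSeq_even]; exact ih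

variable (hm1 : ∀ x y, dist x (m x y) = dist x y / 2)
    (hm2 : ∀ x y, dist y (m x y) = dist x y / 2)

include hm1 hm2 in
lemma geoSeq_consec : ∀ (n : ℕ), ∀ i < 2^n,
    dist (geoSeq m x y n i) (geoSeq m x y n (i+1)) = dist x y / 2^n := by
  intro n
  induction n with
  | zero =>
    intro i hi
    interval_cases i
    simp [geoSeq]
  | succ n ih =>
    intro i hi
    rcases Nat.even_or_odd i with ⟨j, hj⟩ | ⟨j, hj⟩
    · have hj2 : i = 2*j := by omega
      have hjlt : j < 2^n := by omega
      subst hj2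
      rw [show 2*j+1 = 2*j+1 from rfl, geoSeq_even, geoSeq_odd, hm1,
        ih j hjlt]
      ring
    · have hj2 : i = 2*j+1 := by omega
      have hjlt : j < 2^n := by omega
      subst hj2
      have : 2*j+1+1 = 2*(j+1) := by ring
      rw [this, geoSeq_odd, geoSeq_even, dist_comm, hm2, ih j hjlt]
      ring

include hm1 hm2 in
lemma geoSeq_chain (n : ℕ) : ∀ i j : ℕ, i ≤ j → j ≤ 2^n →
    dist (geoSeq m x y n i) (geoSeq m x y n j) ≤ ((j:ℝ) - i) * (dist x y / 2^n) := by
  intro i j hij hj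
  induction j, hij using Nat.le_induction with
  | base => simp
  | succ j hij ih =>
    have hj' : j < 2^n := by omega
    have h1 := ih (by omega)
    have h2 := geoSeq_consec m x y hm1 hm2 n j hj'
    calc dist (geoSeq m x y n i) (geoSeq m x y n (j+1))
        ≤ dist (geoSeq m x y n i) (geoSeq m x y n j)
          + dist (geoSeq m x y n j) (geoSeq m x y n (j+1)) := dist_triangle _ _ _
      _ ≤ ((j:ℝ) - i) * (dist x y / 2^n) + dist x y / 2^n := by
          rw [h2]; linarith
      _ = (((j:ℕ)+1:ℝ) - i) * (dist x y / 2^n) := by ring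
      _ = (((j+1:ℕ):ℝ) - i) * (dist x y / 2^n) := by push_cast; ring

include hm1 hm2 in
lemma geoSeq_dist (n : ℕ) : ∀ i j : ℕ, i ≤ j → j ≤ 2^n →
    dist (geoSeq m x y n i) (geoSeq m x y n j) = ((j:ℝ) - i) * (dist x y / 2^n) := by
  intro i j hij hj
  refine le_antisymm (geoSeq_chain m x y hm1 hm2 n i j hij hj) ?_
  have h0i := geoSeq_chain m x y hm1 hm2 n 0 i (Nat.zero_le _) (le_trans hij hj)
  have hj2 := geoSeq_chain m x y hm1 hm2 n j (2^n) hj le_rfl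
  have hD : dist (geoSeq m x y n 0) (geoSeq m x y n (2^n)) = dist x y := by
    rw [geoSeq_zero, geoSeq_last]
  have htri : dist (geoSeq m x y n 0) (geoSeq m x y n (2^n)) ≤
      dist (geoSeq m x y n 0) (geoSeq m x y n i)
      + dist (geoSeq m x y n i) (geoSeq m x y n j)
      + dist (geoSeq m x y n j) (geoSeq m x y n (2^n)) := dist_triangle4 _ _ _ _
  rw [hD] at htri
  have hpow : ((2:ℝ)^n) ≠ 0 := by positivity
  have hcast : ((2^n : ℕ):ℝ) = (2:ℝ)^n := by push_cast; ring
  rw [hcast] at hj2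
  have hDval : dist x y = (2:ℝ)^n * (dist x y / 2^n) := by field_simp
  nlinarith [dist_nonneg (x := x) (y := y)]

lemma geoSeq_mem (C : Set E) (hC : ∀ u ∈ C, ∀ v ∈ C, m u v ∈ C)
    (hx : x ∈ C) (hy : y ∈ C) : ∀ n i, geoSeq m x y n i ∈ C := by
  intro n
  induction n with
  | zero =>
    intro i
    by_cases h : i = 0 <;> simp [geoSeq, h, hx, hy]
  | succ n ih =>
    intro i
    simp only [geoSeq]
    split
    · exact ih _
    · exact hC _ (ih _) _ (ih _)

lemma floorDivTendsto (c : ℝ) (hc : 0 ≤ c) :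
    Tendsto (fun n : ℕ => ((⌊c * 2 ^ n⌋₊ : ℝ) / 2 ^ n)) atTop (nhds c) := by
  rw [Metric.tendsto_atTop]
  intro ε hε
  obtain ⟨N, hN⟩ := exists_pow_lt_of_lt_one hε (by norm_num : (1:ℝ)/2 < 1)
  refine ⟨N, fun n hn => ?_⟩
  have hpos : (0:ℝ) < 2 ^ n := by positivity
  have hle : (⌊c * 2 ^ n⌋₊ : ℝ) / 2 ^ n ≤ c := by
    rw [div_le_iff₀ hpos]
    exact Nat.floor_le (by positivity)
  have hlt : c - (⌊c * 2 ^ n⌋₊ : ℝ) / 2 ^ n < 1 / 2 ^ n := by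
    have := Nat.lt_floor_add_one (c * 2 ^ n)
    rw [sub_lt_iff_lt_add, ← add_div, lt_div_iff₀ hpos]
    linarith
  have h2 : (1:ℝ) / 2 ^ n ≤ (1/2) ^ N := by
    rw [one_div_pow]
    exact one_div_le_one_div_of_le (by positivity)
      (pow_le_pow_right₀ (by norm_num) hn)
  rw [Real.dist_eq, abs_sub_comm, abs_of_nonneg (by linarith)]
  linarith

include hm1 hm2 in
lemma exists_geodesic [CompleteSpace E] :
    ∃ σ : ℝ → E, σ 0 = x ∧ σ 1 = y ∧
      (∀ a ∈ Set.Icc (0:ℝ) 1, ∀ b ∈ Set.Icc (0:ℝ) 1,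
        dist (σ a) (σ b) = |a - b| * dist x y) ∧
      (∀ C : Set E, IsClosed C → (∀ u ∈ C, ∀ v ∈ C, m u v ∈ C) → x ∈ C → y ∈ C →
        ∀ a : ℝ, σ a ∈ C) := by
  classical
  set cl : ℝ → ℝ := fun a => max 0 (min 1 a) with hcl
  have hcl0 : ∀ a, 0 ≤ cl a := fun a => le_max_left _ _
  have hcl1 : ∀ a, cl a ≤ 1 := fun a => max_le (by norm_num) (min_le_left _ _)
  have hclId : ∀ a ∈ Set.Icc (0:ℝ) 1, cl a = a := by
    intro a ha
    simp only [hcl]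
    rw [min_eq_right ha.2, max_eq_right ha.1]
  set idx : ℝ → ℕ → ℕ := fun a n => ⌊cl a * 2 ^ n⌋₊ with hidx
  have hidxle : ∀ a n, idx a n ≤ 2 ^ n := by
    intro a n
    have h : cl a * 2 ^ n ≤ ((2 ^ n : ℕ) : ℝ) := by
      push_cast
      nlinarith [hcl1 a, hcl0 a, pow_pos (by norm_num : (0:ℝ) < 2) n]
    calc ⌊cl a * 2 ^ n⌋₊ ≤ ⌊((2 ^ n : ℕ) : ℝ)⌋₊ := Nat.floor_le_floor h
      _ = 2 ^ n := Nat.floor_natCast _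
  have hidxmono : ∀ a n, 2 * idx a n ≤ idx a (n+1) ∧ idx a (n+1) ≤ 2 * idx a n + 1 := by
    intro a n
    constructor
    · apply Nat.le_floor
      have := Nat.floor_le (by positivity : (0:ℝ) ≤ cl a * 2 ^ n)
      push_cast
      calc 2 * (⌊cl a * 2 ^ n⌋₊:ℝ) ≤ 2 * (cl a * 2 ^ n) := by linarith
        _ = cl a * 2 ^ (n+1) := by ring
    · have h2 : idx a (n+1) < 2 * idx a n + 2 := by
        rw [hidx, Nat.floor_lt (by positivity)]
        have := Nat.lt_floor_add_one (cl a * 2 ^ n)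
        push_cast
        calc cl a * 2 ^ (n+1) = 2 * (cl a * 2 ^ n) := by ring
          _ < 2 * ((⌊cl a * 2 ^ n⌋₊:ℝ) + 1) := by linarith
          _ = 2 * (⌊cl a * 2 ^ n⌋₊:ℝ) + 2 := by ring
      omega
  set s : ℝ → ℕ → E := fun a n => geoSeq m x y n (idx a n) with hs
  have hcauchy : ∀ a, CauchySeq (s a) := by
    intro a
    apply cauchySeq_of_le_geometric (1/2) (dist x y / 2) (by norm_num)
    intro n
    have he : s a n = geoSeq m x y (n+1) (2 * idx a n) := (geoSeq_even m x y n _).symm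
    have hdist : dist (s a n) (s a (n+1)) =
        ((idx a (n+1) : ℝ) - ((2 * idx a n : ℕ) : ℝ)) * (dist x y / 2 ^ (n+1)) := by
      rw [he]
      exact geoSeq_dist m x y hm1 hm2 (n+1) _ _ (hidxmono a n).1 (hidxle a (n+1))
    have hle1 : ((idx a (n+1) : ℝ) - ((2 * idx a n : ℕ) : ℝ)) ≤ 1 := by
      have h := (hidxmono a n).2
      have h' : ((idx a (n+1) : ℕ) : ℝ) ≤ ((2 * idx a n + 1 : ℕ) : ℝ) := by exact_mod_cast h
      push_cast at h' ⊢
      linarith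
    have hge0 : (0:ℝ) ≤ ((idx a (n+1) : ℝ) - ((2 * idx a n : ℕ) : ℝ)) := by
      have := (hidxmono a n).1
      have : ((2 * idx a n : ℕ) : ℝ) ≤ (idx a (n+1) : ℝ) := by exact_mod_cast this
      linarith
    have hpos : (0:ℝ) ≤ dist x y / 2 ^ (n+1) := by positivity
    have heq : dist x y / 2 * (1/2) ^ n = dist x y / 2 ^ (n+1) := by
      rw [one_div_pow, pow_succ]
      ring
    rw [hdist, heq]
    calc ((idx a (n+1) : ℝ) - ((2 * idx a n : ℕ) : ℝ)) * (dist x y / 2 ^ (n+1))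
        ≤ 1 * (dist x y / 2 ^ (n+1)) := mul_le_mul_of_nonneg_right hle1 hpos
      _ = dist x y / 2 ^ (n+1) := one_mul _
  have hlim : ∀ a, ∃ p : E, Tendsto (s a) atTop (nhds p) :=
    fun a => cauchySeq_tendsto_of_complete (hcauchy a)
  set σ : ℝ → E := fun a => (hlim a).choose with hσ
  have htend : ∀ a, Tendsto (s a) atTop (nhds (σ a)) := fun a => (hlim a).choose_spec
  have hdists : ∀ a ∈ Set.Icc (0:ℝ) 1, ∀ b ∈ Set.Icc (0:ℝ) 1, a ≤ b →
      dist (σ a) (σ b) = (b - a) * dist x y := by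
    intro a ha b hb hab
    have h1 : Tendsto (fun n => dist (s a n) (s b n)) atTop (nhds (dist (σ a) (σ b))) :=
      ((htend a).dist (htend b))
    have hidxab : ∀ n, idx a n ≤ idx b n := by
      intro n
      apply Nat.floor_le_floor
      have : cl a ≤ cl b := by rw [hclId a ha, hclId b hb]; exact hab
      nlinarith [pow_pos (by norm_num : (0:ℝ) < 2) n]
    have h2 : ∀ n, dist (s a n) (s b n) =
        ((idx b n : ℝ) / 2 ^ n - (idx a n : ℝ) / 2 ^ n) * dist x y := by
      intro n
      rw [hs]
      rw [geoSeq_dist m x y hm1 hm2 n _ _ (hidxab n) (hidxle b n)]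
      field_simp
    have h3 : Tendsto (fun n => ((idx b n : ℝ) / 2 ^ n - (idx a n : ℝ) / 2 ^ n) * dist x y)
        atTop (nhds ((b - a) * dist x y)) := by
      apply Tendsto.mul_const
      have ta : Tendsto (fun n : ℕ => (idx a n : ℝ) / 2 ^ n) atTop (nhds a) := by
        have h := floorDivTendsto (cl a) (hcl0 a)
        rw [hclId a ha] at h
        simpa only [hidx, hclId a ha] using h
      have tb : Tendsto (fun n : ℕ => (idx b n : ℝ) / 2 ^ n) atTop (nhds b) := by
        have h := floorDivTendsto (cl b) (hcl0 b)
        rw [hclId b hb] at h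
        simpa only [hidx, hclId b hb] using h
      simpa using tb.sub ta
    rw [show (fun n => dist (s a n) (s b n)) =
      (fun n => ((idx b n : ℝ) / 2 ^ n - (idx a n : ℝ) / 2 ^ n) * dist x y) from funext h2] at h1
    exact tendsto_nhds_unique h1 h3
  refine ⟨σ, ?_, ?_, ?_, ?_⟩
  · have : ∀ n, s 0 n = x := by
      intro n
      have h0 : idx 0 n = 0 := by
        simp [hidx, hcl]
      show geoSeq m x y n (idx 0 n) = x
      rw [h0]
      exact geoSeq_zero m x y n
    have h1 : Tendsto (s 0) atTop (nhds x) := by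
      rw [funext this]; exact tendsto_const_nhds
    exact tendsto_nhds_unique (htend 0) h1
  · have : ∀ n, s 1 n = y := by
      intro n
      have hcl1' : cl 1 = 1 := hclId 1 (by norm_num)
      have : idx 1 n = 2 ^ n := by
        rw [hidx]
        simp only [hcl1', one_mul]
        rw [show ((2:ℝ) ^ n) = ((2 ^ n : ℕ) : ℝ) by push_cast; ring, Nat.floor_natCast]
      show geoSeq m x y n (idx 1 n) = y
      rw [this]
      exact geoSeq_last m x y n
    have h1 : Tendsto (s 1) atTop (nhds y) := by
      rw [funext this]; exact tendsto_const_nhds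
    exact tendsto_nhds_unique (htend 1) h1
  · intro a ha b hb
    rcases le_or_gt a b with hab | hab
    · rw [hdists a ha b hb hab, abs_of_nonpos (by linarith)]
      ring
    · rw [dist_comm, hdists b hb a ha hab.le, abs_of_nonneg (by linarith : (0:ℝ) ≤ a - b)]
  · intro C hC hmC hxC hyC a
    refine hC.mem_of_tendsto (htend a) (Filter.Eventually.of_forall fun n => ?_)
    exact geoSeq_mem m x y C hmC hxC hyC n _

lemma geodesic_unique (hE : IsCAT0 E) {σ τ : ℝ → E} {D : ℝ}
    (hσ : ∀ a ∈ Set.Icc (0:ℝ) 1, ∀ b ∈ Set.Icc (0:ℝ) 1, dist (σ a) (σ b) = |a - b| * D)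
    (hτ : ∀ a ∈ Set.Icc (0:ℝ) 1, ∀ b ∈ Set.Icc (0:ℝ) 1, dist (τ a) (τ b) = |a - b| * D)
    (h0 : σ 0 = τ 0) (h1 : σ 1 = τ 1) : ∀ a ∈ Set.Icc (0:ℝ) 1, σ a = τ a := by
  have key : Set.Icc (0:ℝ) 1 ⊆ {a | σ a = τ a} := by
    apply dyadicDense
    · exact h0
    · exact h1
    · rintro a ⟨ha, haI⟩ b ⟨hb, hbI⟩
      have hm : (a + b) / 2 ∈ Set.Icc (0:ℝ) 1 := by
        constructor
        · have := haI.1; have := hbI.1; simp only [Set.mem_Icc] at *; linarith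
        · have := haI.2; have := hbI.2; simp only [Set.mem_Icc] at *; linarith
      have e1 : |a - (a+b)/2| = |a - b| / 2 := by
        rw [show a - (a+b)/2 = (a-b)/2 by ring, abs_div]
        norm_num
      have e2 : |b - (a+b)/2| = |a - b| / 2 := by
        rw [show b - (a+b)/2 = -((a-b)/2) by ring, abs_neg, abs_div]
        norm_num
      have d1 : dist (σ a) (σ ((a+b)/2)) = dist (σ a) (σ b) / 2 := by
        rw [hσ a haI _ hm, hσ a haI b hbI, e1]; ring
      have d2 : dist (σ b) (σ ((a+b)/2)) = dist (σ a) (σ b) / 2 := by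
        rw [hσ b hbI _ hm, hσ a haI b hbI, e2]; ring
      have d1' : dist (σ a) (τ ((a+b)/2)) = dist (σ a) (σ b) / 2 := by
        rw [ha, hb]
        rw [hτ a haI _ hm, hτ a haI b hbI, e1]; ring
      have d2' : dist (σ b) (τ ((a+b)/2)) = dist (σ a) (σ b) / 2 := by
        rw [ha] at d1' ⊢
        rw [hb]
        rw [hτ b hbI _ hm, hτ a haI b hbI, e2]; ring
      exact cat0_midpoint_unique hE d1 d2 d1' d2'
    · intro a ha u hu hlim
      have hσc : Tendsto (fun n => σ (u n)) atTop (nhds (σ a)) := by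
        rw [tendsto_iff_dist_tendsto_zero]
        have : ∀ n, dist (σ (u n)) (σ a) = |u n - a| * D := fun n =>
          hσ _ (hu n).2 a ha
        rw [funext this]
        have h1 : Tendsto (fun n => u n - a) atTop (nhds 0) := by
          simpa using hlim.sub_const a
        have := (h1.abs).mul_const D
        simpa using this
      have hτc : Tendsto (fun n => σ (u n)) atTop (nhds (τ a)) := by
        rw [tendsto_iff_dist_tendsto_zero]
        have : ∀ n, dist (σ (u n)) (τ a) = |u n - a| * D := fun n => by
          rw [(hu n).1]
          exact hτ _ (hu n).2 a ha
        rw [funext this]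
        have h1 : Tendsto (fun n => u n - a) atTop (nhds 0) := by
          simpa using hlim.sub_const a
        have := (h1.abs).mul_const D
        simpa using this
      exact tendsto_nhds_unique hσc hτc
  intro a ha
  exact key ha
lemma circumcenter [CompleteSpace E] (hE : IsCAT0 E) (Y : Set E)
    (hclosed : IsClosed Y) (hmidcl : ∀ u ∈ Y, ∀ v ∈ Y, cmid hE u v ∈ Y)
    (hYne : Y.Nonempty) (S : Finset E) (hS : S.Nonempty) :
    ∃ c ∈ Y, (∀ y ∈ Y, S.sup' hS (fun s => dist c s) ≤ S.sup' hS (fun s => dist y s)) ∧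
      (∀ y ∈ Y, S.sup' hS (fun s => dist y s) ≤ S.sup' hS (fun s => dist c s) → y = c) := by
  classical
  set r : E → ℝ := fun z => S.sup' hS (fun s => dist z s) with hr
  have hr0 : ∀ z, 0 ≤ r z := by
    intro z
    obtain ⟨s, hs⟩ := hS
    exact le_trans dist_nonneg (Finset.le_sup' _ hs)
  have hle_r : ∀ z s, s ∈ S → dist z s ≤ r z := fun z s hs => Finset.le_sup' _ hs
  have hrLip : ∀ z w, r z ≤ r w + dist z w := by
    intro z w
    apply Finset.sup'_le
    intro s hs
    have t := dist_triangle z w s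
    have h2 := hle_r w s hs
    linarith
  -- CN estimate for the radius at midpoints
  have hCN : ∀ u ∈ Y, ∀ v ∈ Y,
      r (cmid hE u v) ^ 2 ≤ (r u ^ 2 + r v ^ 2) / 2 - dist u v ^ 2 / 4 := by
    intro u hu v hv
    obtain ⟨s, hsS, hseq⟩ := Finset.exists_mem_eq_sup' hS (fun s => dist (cmid hE u v) s)
    have h1 : r (cmid hE u v) = dist (cmid hE u v) s := hseq
    have h2 := cmid_cn hE u v s
    rw [dist_comm s (cmid hE u v)] at h2
    have h3 : dist s u ≤ r u := by rw [dist_comm]; exact hle_r u s hsS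
    have h4 : dist s v ≤ r v := by rw [dist_comm]; exact hle_r v s hsS
    have h5 : dist s u ^ 2 ≤ r u ^ 2 := by nlinarith [dist_nonneg (x := s) (y := u), hr0 u]
    have h6 : dist s v ^ 2 ≤ r v ^ 2 := by nlinarith [dist_nonneg (x := s) (y := v), hr0 v]
    rw [h1]
    nlinarith
  set ρ : ℝ := sInf (r '' Y) with hρ
  have hne : (r '' Y).Nonempty := hYne.image r
  have hbdd : BddBelow (r '' Y) := ⟨0, by rintro _ ⟨w, _, rfl⟩; exact hr0 w⟩
  have hρle : ∀ y ∈ Y, ρ ≤ r y := fun y hy => csInf_le hbdd ⟨y, hy, rfl⟩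
  have hρ0 : 0 ≤ ρ := le_csInf hne (by rintro _ ⟨w, _, rfl⟩; exact hr0 w)
  -- minimizing sequence
  have hseq : ∀ n : ℕ, ∃ y ∈ Y, r y < ρ + 1/(n+1) := by
    intro n
    have : ρ < ρ + 1/(n+1) := by
      have : (0:ℝ) < 1/(n+1) := by positivity
      linarith
    obtain ⟨z, ⟨w, hw, rfl⟩, hz⟩ := exists_lt_of_csInf_lt hne this
    exact ⟨w, hw, hz⟩
  choose u huY hur using hseq
  have hdd : ∀ n m' : ℕ, dist (u n) (u m') ^ 2 ≤
      2 * (r (u n))^2 + 2 * (r (u m'))^2 - 4 * ρ^2 := by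
    intro n m'
    have hm := hmidcl _ (huY n) _ (huY m')
    have h1 := hCN _ (huY n) _ (huY m')
    have h2 : ρ ≤ r (cmid hE (u n) (u m')) := hρle _ hm
    nlinarith [hr0 (u n), hr0 (u m')]
  have hbound : ∀ n m' N : ℕ, N ≤ n → N ≤ m' →
      dist (u n) (u m') ^ 2 ≤ (8 * ρ + 4) * (1/(N+1)) := by
    intro n m' N hn hm'
    have e1 : 1/((n:ℝ)+1) ≤ 1/((N:ℝ)+1) := by
      apply one_div_le_one_div_of_le (by positivity)
      have : (N:ℝ) ≤ n := by exact_mod_cast hn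
      linarith
    have e2 : 1/((m':ℝ)+1) ≤ 1/((N:ℝ)+1) := by
      apply one_div_le_one_div_of_le (by positivity)
      have : (N:ℝ) ≤ m' := by exact_mod_cast hm'
      linarith
    have e3 : 1/((N:ℝ)+1) ≤ 1 := by
      rw [div_le_one (by positivity)]
      have : (0:ℝ) ≤ N := by positivity
      linarith
    have h1 := hdd n m'
    have h2 := hur n
    have h3 := hur m'
    have h4 : r (u n) ^ 2 ≤ (ρ + 1/(n+1))^2 := by
      nlinarith [hr0 (u n), hρ0]
    have h5 : r (u m') ^ 2 ≤ (ρ + 1/(m'+1))^2 := by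
      nlinarith [hr0 (u m'), hρ0]
    have hp1 : (0:ℝ) < 1/((n:ℝ)+1) := by positivity
    have hp2 : (0:ℝ) < 1/((m':ℝ)+1) := by positivity
    nlinarith [hρ0]
  have hcauchy : CauchySeq u := by
    rw [Metric.cauchySeq_iff]
    intro ε hε
    obtain ⟨N, hN⟩ := exists_nat_gt ((8 * ρ + 4) / ε^2)
    refine ⟨N, fun n hn m' hm' => ?_⟩
    have hb := hbound n m' N hn hm'
    have hNpos : (8 * ρ + 4)/ε^2 < N := hN
    have h8 : (0:ℝ) < 8 * ρ + 4 := by linarith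
    have hlt : (8 * ρ + 4) * (1/(N+1)) < ε^2 := by
      rw [mul_one_div, div_lt_iff₀ (by positivity)]
      rw [div_lt_iff₀ (by positivity : (0:ℝ) < ε^2)] at hNpos
      nlinarith [sq_nonneg ε, hε]
    have : dist (u n) (u m') ^ 2 < ε ^ 2 := lt_of_le_of_lt hb hlt
    nlinarith [dist_nonneg (x := u n) (y := u m'), hε]
  obtain ⟨c, hc⟩ := cauchySeq_tendsto_of_complete hcauchy
  have hcY : c ∈ Y := hclosed.mem_of_tendsto hc (Eventually.of_forall huY)
  have hrc : r c = ρ := by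
    refine le_antisymm ?_ (hρle c hcY)
    have h1 : ∀ n, r c ≤ ρ + 1/(n+1) + dist c (u n) := by
      intro n
      calc r c ≤ r (u n) + dist c (u n) := hrLip c (u n)
        _ ≤ ρ + 1/(n+1) + dist c (u n) := by linarith [hur n]
    have h2 : Tendsto (fun n : ℕ => ρ + 1/((n:ℝ)+1) + dist c (u n)) atTop (nhds (ρ + 0 + 0)) := by
      apply Tendsto.add
      · apply Tendsto.add tendsto_const_nhds
        exact tendsto_one_div_add_atTop_nhds_zero_nat
      · have : Tendsto u atTop (nhds c) := hc
        rw [tendsto_iff_dist_tendsto_zero] at this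
        simpa [dist_comm] using this
    have h3 := le_of_tendsto_of_tendsto tendsto_const_nhds h2 (Eventually.of_forall h1)
    linarith [h3]
  refine ⟨c, hcY, ?_, ?_⟩
  · intro y hy
    rw [show S.sup' hS (fun s => dist c s) = r c from rfl, hrc]
    exact hρle y hy
  · intro y hy hle
    have h1 : r y ≤ ρ := by rw [← hrc]; exact hle
    have h2 : ρ ≤ r y := hρle y hy
    have h3 : r y = ρ := le_antisymm h1 h2
    have hm := hmidcl _ hy _ hcY
    have h4 := hCN _ hy _ hcY
    have h5 : ρ ≤ r (cmid hE y c) := hρle _ hm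
    rw [h3, hrc] at h4
    have h6 : ρ^2 ≤ r (cmid hE y c)^2 := by nlinarith [hρ0]
    have h7 : dist y c ^ 2 ≤ 0 := by linarith
    have h8 : dist y c ^ 2 = 0 := le_antisymm h7 (sq_nonneg _)
    have h9 : dist y c = 0 := by
      exact pow_eq_zero_iff (by norm_num : (2:ℕ) ≠ 0) |>.mp h8
    exact dist_eq_zero.mp h9

end CAT0Aux

theorem cat0_semisimple_of_pow_min {E : Type*} [MetricSpace E] [CompleteSpace E] (hE : IsCAT0 E)
    (γ : E ≃ᵢ E) (k : ℕ) (hk : 0 < k) (x₀ : E)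
    (hx₀ : dist ((γ ^ k) x₀) x₀ = transLen (γ ^ k)) : IsSemisimple γ := by
  classical
  haveI : Nonempty E := ⟨x₀⟩
  set δ : E ≃ᵢ E := γ ^ k with hδdef
  set L : ℝ := transLen δ with hLdef
  have hbdd : BddBelow (Set.range fun z : E => dist (δ z) z) :=
    ⟨0, by rintro _ ⟨w, rfl⟩; exact dist_nonneg⟩
  have hLle : ∀ z, L ≤ dist (δ z) z := fun z => ciInf_le hbdd z
  have hL0 : 0 ≤ L := le_ciInf fun z => dist_nonneg
  -- pow to iterate
  have hpow : ∀ (n : ℕ) (z : E), (γ ^ n) z = (⇑γ)^[n] z := by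
    intro n
    induction n with
    | zero => intro z; simp
    | succ n ih =>
      intro z
      rw [pow_succ, IsometryEquiv.mul_apply, ih (γ z), Function.iterate_succ_apply]
  have hδγ : ∀ z, δ (γ z) = γ (δ z) := by
    intro z
    rw [hδdef, hpow k (γ z), hpow k z, ← Function.iterate_succ_apply]
    exact Function.iterate_succ_apply' _ k z
  have hδsγ : ∀ z, δ.symm (γ z) = γ (δ.symm z) := by
    intro z
    rw [IsometryEquiv.symm_apply_eq]
    rw [hδγ (δ.symm z), IsometryEquiv.apply_symm_apply]
  -- the min set
  set Y : Set E := {z | dist (δ z) z = L} with hYdef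
  have hx₀Y : x₀ ∈ Y := hx₀
  have hzY : ∀ z ∈ Y, dist z (δ z) = L := by
    intro z hz; rw [dist_comm]; exact hz
  have hYγ : ∀ z ∈ Y, γ z ∈ Y := by
    intro z hz
    show dist (δ (γ z)) (γ z) = L
    rw [hδγ z, γ.dist_eq]
    exact hz
  have hYδ : ∀ z ∈ Y, δ z ∈ Y := by
    intro z hz
    show dist (δ (δ z)) (δ z) = L
    rw [δ.dist_eq]
    exact hz
  have hYδs : ∀ z ∈ Y, δ.symm z ∈ Y := by
    intro z hz
    show dist (δ (δ.symm z)) (δ.symm z) = L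
    rw [IsometryEquiv.apply_symm_apply]
    have : dist (δ.symm (δ z)) (δ.symm z) = L := by rw [δ.symm.dist_eq]; exact hz
    rwa [IsometryEquiv.symm_apply_apply] at this
  have hYclosed : IsClosed Y :=
    isClosed_eq (δ.continuous.dist continuous_id) continuous_const
  have hYmid : ∀ u ∈ Y, ∀ v ∈ Y, cmid hE u v ∈ Y := by
    intro u hu v hv
    have h1 : δ (cmid hE u v) = cmid hE (δ u) (δ v) := isometryEquiv_cmid hE δ u v
    have h2 : dist (δ (cmid hE u v)) (cmid hE u v) ≤ L := by
      rw [h1]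
      calc dist (cmid hE (δ u) (δ v)) (cmid hE u v)
          ≤ (dist (δ u) u + dist (δ v) v) / 2 := cmid_contract hE _ _ _ _
        _ = L := by rw [hu, hv]; ring
    exact le_antisymm h2 (hLle _)
  -- doubling
  have h2L : ∀ z, 2 * L ≤ dist (δ (δ z)) z := by
    intro z
    set m := cmid hE z (δ z) with hm
    have h1 : L ≤ dist (δ m) m := hLle m
    have h2 : δ m = cmid hE (δ z) (δ (δ z)) := isometryEquiv_cmid hE δ z (δ z)
    have h3 : m = cmid hE (δ z) z := by rw [hm, cmid_comm]
    have h4 : dist m (δ m) ≤ dist z (δ (δ z)) / 2 := by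
      rw [h2, h3]
      exact cmid_contract₁ hE (δ z) z (δ (δ z))
    rw [dist_comm (δ (δ z)) z]
    rw [dist_comm (δ m) m] at h1
    linarith
  -- geodesics from z to δ z
  have hgeo : ∀ z : E, ∃ σ : ℝ → E, σ 0 = z ∧ σ 1 = δ z ∧
      (∀ a ∈ Set.Icc (0:ℝ) 1, ∀ b ∈ Set.Icc (0:ℝ) 1,
        dist (σ a) (σ b) = |a - b| * dist z (δ z)) ∧
      (∀ C : Set E, IsClosed C → (∀ u ∈ C, ∀ v ∈ C, cmid hE u v ∈ C) → z ∈ C → δ z ∈ C →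
        ∀ a : ℝ, σ a ∈ C) :=
    fun z => exists_geodesic (cmid hE) z (δ z) (cmid_dist₁ hE) (cmid_dist₂ hE)
  choose σ hσ0 hσ1 hσd hσC using hgeo
  have hσdY : ∀ z ∈ Y, ∀ a ∈ Set.Icc (0:ℝ) 1, ∀ b ∈ Set.Icc (0:ℝ) 1,
      dist (σ z a) (σ z b) = |a - b| * L := by
    intro z hz a ha b hb
    rw [hσd z a ha b hb, hzY z hz]
  have hmemY : ∀ z ∈ Y, ∀ a : ℝ, σ z a ∈ Y := fun z hz a =>
    hσC z Y hYclosed hYmid hz (hYδ z hz) a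
  -- the doubled path
  set c2 : E → ℝ → E := fun z a => if a ≤ 1 then σ z a else δ (σ z (a - 1)) with hc2def
  have hc2of : ∀ z, ∀ a : ℝ, a ≤ 1 → c2 z a = σ z a := by
    intro z a ha; simp only [hc2def, if_pos ha]
  have hc2of' : ∀ z, ∀ a : ℝ, ¬(a ≤ 1) → c2 z a = δ (σ z (a - 1)) := by
    intro z a ha; simp only [hc2def, if_neg ha]
  have hc2d_le : ∀ z ∈ Y, ∀ a b : ℝ, 0 ≤ a → a ≤ b → b ≤ 2 →
      dist (c2 z a) (c2 z b) = (b - a) * L := by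
    intro z hz a b ha hab hb2
    by_cases hb1 : b ≤ 1
    · have ha1 : a ≤ 1 := le_trans hab hb1
      rw [hc2of z a ha1, hc2of z b hb1,
        hσdY z hz a ⟨ha, ha1⟩ b ⟨le_trans ha hab, hb1⟩, abs_of_nonpos (by linarith)]
      ring
    · push_neg at hb1
      have hbm : b - 1 ∈ Set.Icc (0:ℝ) 1 := ⟨by linarith, by linarith⟩
      by_cases ha1 : a ≤ 1
      · rw [hc2of z a ha1, hc2of' z b (by linarith)]
        have haI : a ∈ Set.Icc (0:ℝ) 1 := ⟨ha, ha1⟩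
        have e1 : dist (σ z a) (σ z 1) = (1 - a) * L := by
          rw [hσdY z hz a haI 1 ⟨by norm_num, le_rfl⟩, abs_of_nonpos (by linarith)]
          ring
        have e2 : dist (σ z 1) (δ (σ z (b-1))) = (b - 1) * L := by
          have : σ z 1 = δ (σ z 0) := by rw [hσ0, hσ1]
          rw [this, δ.dist_eq,
            hσdY z hz 0 ⟨le_rfl, by norm_num⟩ (b-1) hbm, abs_of_nonpos (by linarith)]
          ring
        have e3 : dist (δ (σ z (b-1))) (δ (δ z)) = (2 - b) * L := by
          have : δ (δ z) = δ (σ z 1) := by rw [hσ1]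
          rw [this, δ.dist_eq,
            hσdY z hz (b-1) hbm 1 ⟨by norm_num, le_rfl⟩, abs_of_nonpos (by linarith)]
          ring
        have e4 : dist (σ z a) z = a * L := by
          have e4' : dist (σ z a) (σ z 0) = a * L := by
            rw [hσdY z hz a haI 0 ⟨le_rfl, by norm_num⟩, abs_of_nonneg (by linarith)]
            ring
          rwa [hσ0] at e4'

        refine le_antisymm ?_ ?_
        · calc dist (σ z a) (δ (σ z (b-1)))
              ≤ dist (σ z a) (σ z 1) + dist (σ z 1) (δ (σ z (b-1))) := dist_triangle _ _ _
            _ = (b - a) * L := by rw [e1, e2]; ring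
        · have h5 := h2L z
          have h6 : dist (δ (δ z)) z ≤ dist (δ (δ z)) (δ (σ z (b-1)))
              + dist (δ (σ z (b-1))) (σ z a) + dist (σ z a) z := dist_triangle4 _ _ _ _
          rw [dist_comm (δ (δ z)) (δ (σ z (b-1))), e3, e4] at h6
          rw [dist_comm (δ (σ z (b-1))) (σ z a)] at h6
          linarith
      · push_neg at ha1
        have ham : a - 1 ∈ Set.Icc (0:ℝ) 1 := ⟨by linarith, by linarith⟩
        rw [hc2of' z a (by linarith), hc2of' z b (by linarith), δ.dist_eq,
          hσdY z hz (a-1) ham (b-1) hbm, abs_of_nonpos (by linarith)]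
        ring
  have hc2d : ∀ z ∈ Y, ∀ a ∈ Set.Icc (0:ℝ) 2, ∀ b ∈ Set.Icc (0:ℝ) 2,
      dist (c2 z a) (c2 z b) = |a - b| * L := by
    intro z hz a ha b hb
    rcases le_total a b with h | h
    · rw [hc2d_le z hz a b ha.1 h hb.2, abs_of_nonpos (by linarith)]
      ring
    · rw [dist_comm, hc2d_le z hz b a hb.1 h ha.2, abs_of_nonneg (by linarith)]
  have hc2m : ∀ z ∈ Y, ∀ a ∈ Set.Icc (0:ℝ) 2, ∀ b ∈ Set.Icc (0:ℝ) 2,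
      cmid hE (c2 z a) (c2 z b) = c2 z ((a + b)/2) := by
    intro z hz a ha b hb
    have hm : (a + b)/2 ∈ Set.Icc (0:ℝ) 2 := by
      constructor
      · have := ha.1; have := hb.1; simp only [Set.mem_Icc] at *; linarith
      · have := ha.2; have := hb.2; simp only [Set.mem_Icc] at *; linarith
    refine (midpoint_eq_cmid hE ?_ ?_).symm
    · rw [hc2d z hz a ha _ hm, hc2d z hz a ha b hb,
        show a - (a+b)/2 = (a-b)/2 by ring, abs_div]
      norm_num
      ring
    · rw [hc2d z hz b hb _ hm, hc2d z hz a ha b hb,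
        show b - (a+b)/2 = -((a-b)/2) by ring, abs_neg, abs_div]
      norm_num
      ring
  -- constancy of dist between parallel geodesics
  have hconst : ∀ y ∈ Y, ∀ y' ∈ Y, ∀ a ∈ Set.Icc (0:ℝ) 2,
      dist (c2 y a) (c2 y' a) = dist y y' := by
    intro y hy y' hy'
    set D := dist y y' with hD
    have hmem2 : ∀ t : ℝ, t ∈ Set.Icc (0:ℝ) 1 → 2 * t ∈ Set.Icc (0:ℝ) 2 := by
      intro t ht
      exact ⟨by linarith [ht.1], by linarith [ht.2]⟩
    have hcont : ∀ t ∈ Set.Icc (0:ℝ) 1, ∀ u : ℕ → ℝ,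
        (∀ n, u n ∈ Set.Icc (0:ℝ) 1) → Tendsto u atTop (nhds t) →
        Tendsto (fun n => dist (c2 y (2 * u n)) (c2 y' (2 * u n))) atTop
          (nhds (dist (c2 y (2*t)) (c2 y' (2*t)))) := by
      intro t ht u hu hlim
      have habs : Tendsto (fun n => |2 * u n - 2 * t| * L) atTop (nhds 0) := by
        have h1 : Tendsto (fun n => 2 * u n - 2 * t) atTop (nhds 0) := by
          have := (hlim.const_mul 2).sub_const (2*t)
          simpa using this
        have := (h1.abs).mul_const L
        simpa using this
      have hy1 : Tendsto (fun n => c2 y (2 * u n)) atTop (nhds (c2 y (2*t))) := by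
        rw [tendsto_iff_dist_tendsto_zero]
        have heq : ∀ n, dist (c2 y (2 * u n)) (c2 y (2*t)) = |2 * u n - 2 * t| * L :=
          fun n => hc2d y hy _ (hmem2 _ (hu n)) _ (hmem2 _ ht)
        rw [funext heq]
        exact habs
      have hy2 : Tendsto (fun n => c2 y' (2 * u n)) atTop (nhds (c2 y' (2*t))) := by
        rw [tendsto_iff_dist_tendsto_zero]
        have heq : ∀ n, dist (c2 y' (2 * u n)) (c2 y' (2*t)) = |2 * u n - 2 * t| * L :=
          fun n => hc2d y' hy' _ (hmem2 _ (hu n)) _ (hmem2 _ ht)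
        rw [funext heq]
        exact habs
      exact hy1.dist hy2
    have stage1 : ∀ t ∈ Set.Icc (0:ℝ) 1, dist (c2 y (2*t)) (c2 y' (2*t)) ≤ D := by
      have := dyadicDense {t : ℝ | dist (c2 y (2*t)) (c2 y' (2*t)) ≤ D} ?_ ?_ ?_ ?_
      · intro t ht; exact this ht
      · show dist (c2 y (2*0)) (c2 y' (2*0)) ≤ D
        rw [show (2:ℝ)*0 = 0 by ring, hc2of y 0 (by norm_num), hc2of y' 0 (by norm_num),
          hσ0, hσ0]
      · show dist (c2 y (2*1)) (c2 y' (2*1)) ≤ D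
        rw [show (2:ℝ)*1 = 2 by ring, hc2of' y 2 (by norm_num), hc2of' y' 2 (by norm_num),
          show (2:ℝ) - 1 = 1 by ring, hσ1, hσ1, δ.dist_eq, δ.dist_eq]
      · rintro t₁ ⟨hS1, hI1⟩ t₂ ⟨hS2, hI2⟩
        show dist (c2 y (2*((t₁+t₂)/2))) (c2 y' (2*((t₁+t₂)/2))) ≤ D
        rw [show (2:ℝ)*((t₁+t₂)/2) = (2*t₁ + 2*t₂)/2 by ring]
        rw [← hc2m y hy _ (hmem2 _ hI1) _ (hmem2 _ hI2),
          ← hc2m y' hy' _ (hmem2 _ hI1) _ (hmem2 _ hI2)]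
        calc dist (cmid hE (c2 y (2*t₁)) (c2 y (2*t₂)))
              (cmid hE (c2 y' (2*t₁)) (c2 y' (2*t₂)))
            ≤ (dist (c2 y (2*t₁)) (c2 y' (2*t₁)) + dist (c2 y (2*t₂)) (c2 y' (2*t₂))) / 2 :=
              cmid_contract hE _ _ _ _
          _ ≤ D := by simp only [Set.mem_setOf_eq] at hS1 hS2; linarith
      · intro t ht u hu hlim
        show dist (c2 y (2*t)) (c2 y' (2*t)) ≤ D
        refine le_of_tendsto (hcont t ht u (fun n => (hu n).2) hlim) ?_
        exact Eventually.of_forall fun n => (hu n).1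
    intro a ha
    have h2a : 2 - a ∈ Set.Icc (0:ℝ) 2 := ⟨by linarith [ha.2], by linarith [ha.1]⟩
    have hup : dist (c2 y a) (c2 y' a) ≤ D := by
      have := stage1 (a/2) ⟨by linarith [ha.1], by linarith [ha.2]⟩
      rwa [show 2*(a/2) = a by ring] at this
    have hup2 : dist (c2 y (2-a)) (c2 y' (2-a)) ≤ D := by
      have := stage1 ((2-a)/2) ⟨by linarith [ha.2], by linarith [ha.1]⟩
      rwa [show 2*((2-a)/2) = 2-a by ring] at this
    have h1 := hc2m y hy a ha (2-a) h2a
    have h1' := hc2m y' hy' a ha (2-a) h2a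
    rw [show (a + (2-a))/2 = 1 by ring] at h1 h1'
    have g1 : dist (c2 y 1) (c2 y' 1) = D := by
      rw [hc2of y 1 le_rfl, hc2of y' 1 le_rfl, hσ1, hσ1, δ.dist_eq]
    have hlow : D ≤ dist (c2 y a) (c2 y' a) := by
      have := cmid_contract hE (c2 y a) (c2 y (2-a)) (c2 y' a) (c2 y' (2-a))
      rw [h1, h1', g1] at this
      linarith
    exact le_antisymm hup hlow
  -- the 1/k-step flow along axes
  have hkR : (0:ℝ) < k := by exact_mod_cast hk
  have hk1R : (1:ℝ) ≤ k := by exact_mod_cast hk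
  have hinvk : (1:ℝ)/k ∈ Set.Icc (0:ℝ) 1 :=
    ⟨by positivity, by rw [div_le_one hkR]; exact hk1R⟩
  set p : E → E := fun z => σ z (1/(k:ℝ)) with hpdef
  have hpY : ∀ z ∈ Y, p z ∈ Y := fun z hz => hmemY z hz _
  have hpiso : ∀ y ∈ Y, ∀ y' ∈ Y, dist (p y) (p y') = dist y y' := by
    intro y hy y' hy'
    have h1 : p y = c2 y (1/(k:ℝ)) := (hc2of y _ hinvk.2).symm
    have h2 : p y' = c2 y' (1/(k:ℝ)) := (hc2of y' _ hinvk.2).symm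
    rw [h1, h2]
    exact hconst y hy y' hy' _ ⟨hinvk.1, by linarith [hinvk.2]⟩
  have hcomp : ∀ y ∈ Y, ∀ b : ℝ, 0 ≤ b → b ≤ 1 → ∀ t ∈ Set.Icc (0:ℝ) 1,
      σ (σ y b) t = c2 y (b + t) := by
    intro y hy b hb0 hb1
    have hbY : σ y b ∈ Y := hmemY y hy b
    refine geodesic_unique hE (D := L) (hσdY _ hbY) ?_ ?_ ?_
    · intro t ht t' ht'
      have hm1 : b + t ∈ Set.Icc (0:ℝ) 2 := ⟨by linarith [ht.1], by linarith [ht.2]⟩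
      have hm2 : b + t' ∈ Set.Icc (0:ℝ) 2 := ⟨by linarith [ht'.1], by linarith [ht'.2]⟩
      rw [hc2d y hy _ hm1 _ hm2, show b + t - (b + t') = t - t' by ring]
    · rw [hσ0, add_zero, hc2of y b hb1]
    · rw [hσ1]
      by_cases hb1' : b + 1 ≤ 1
      · have hb0' : b = 0 := le_antisymm (by linarith) hb0
        rw [hb0', hc2of y (0+1) (by norm_num), show (0:ℝ)+1 = 1 by ring, hσ1, hσ0]
      · rw [hc2of' y (b+1) hb1', show b + 1 - 1 = b by ring]
  have hpit : ∀ i : ℕ, i ≤ k → ∀ y ∈ Y, p^[i] y = σ y ((i:ℝ)/k) := by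
    intro i
    induction i with
    | zero =>
      intro _ y hy
      simp only [Function.iterate_zero, id_eq, Nat.cast_zero, zero_div]
      rw [hσ0]
    | succ i ih =>
      intro hik y hy
      have hik' : i ≤ k := by omega
      have hiK : (i:ℝ)/k ≤ 1 := by
        rw [div_le_one hkR]; exact_mod_cast hik'
      have hiK0 : (0:ℝ) ≤ (i:ℝ)/k := by positivity
      rw [Function.iterate_succ_apply', ih hik' y hy]
      have h1 : p (σ y ((i:ℝ)/k)) = σ (σ y ((i:ℝ)/k)) (1/(k:ℝ)) := rfl
      rw [h1, hcomp y hy _ hiK0 hiK _ hinvk, ← add_div]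
      have hcast : ((i:ℝ) + 1) = ((i+1:ℕ):ℝ) := by push_cast; ring
      rw [hcast]
      apply hc2of
      rw [div_le_one hkR]
      exact_mod_cast hik
  have hpk : ∀ y ∈ Y, p^[k] y = δ y := by
    intro y hy
    rw [hpit k le_rfl y hy, div_self (ne_of_gt hkR), hσ1]
  have hpcommγ : ∀ y ∈ Y, p (γ y) = γ (p y) := by
    intro y hy
    exact geodesic_unique hE (D := L) (hσdY _ (hYγ y hy))
      (by
        intro t ht t' ht'
        rw [γ.dist_eq]
        exact hσdY y hy t ht t' ht')
      (by rw [hσ0, hσ0])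
      (by rw [hσ1, hσ1, hδγ]) _ hinvk
  have hpcommδs : ∀ y ∈ Y, p (δ.symm y) = δ.symm (p y) := by
    intro y hy
    exact geodesic_unique hE (D := L) (hσdY _ (hYδs y hy))
      (by
        intro t ht t' ht'
        rw [δ.symm.dist_eq]
        exact hσdY y hy t ht t' ht')
      (by rw [hσ0, hσ0])
      (by rw [hσ1, hσ1, IsometryEquiv.apply_symm_apply, IsometryEquiv.symm_apply_apply])
      _ hinvk
  have hpitY : ∀ i : ℕ, ∀ y ∈ Y, p^[i] y ∈ Y := by
    intro i
    induction i with
    | zero => intro y hy; simpa using hy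
    | succ i ih =>
      intro y hy
      rw [Function.iterate_succ_apply']
      exact hpY _ (ih y hy)
  have hpitiso : ∀ i : ℕ, ∀ y ∈ Y, ∀ y' ∈ Y, dist (p^[i] y) (p^[i] y') = dist y y' := by
    intro i
    induction i with
    | zero => intro y _ y' _; simp
    | succ i ih =>
      intro y hy y' hy'
      rw [Function.iterate_succ_apply', Function.iterate_succ_apply']
      rw [hpiso _ (hpitY i y hy) _ (hpitY i y' hy')]
      exact ih y hy y' hy'
  have hγitY : ∀ j : ℕ, ∀ y ∈ Y, (⇑γ)^[j] y ∈ Y := by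
    intro j
    induction j with
    | zero => intro y hy; simpa using hy
    | succ j ih =>
      intro y hy
      rw [Function.iterate_succ_apply']
      exact hYγ _ (ih y hy)
  have hδsitY : ∀ j : ℕ, ∀ y ∈ Y, (⇑δ.symm)^[j] y ∈ Y := by
    intro j
    induction j with
    | zero => intro y hy; simpa using hy
    | succ j ih =>
      intro y hy
      rw [Function.iterate_succ_apply']
      exact hYδs _ (ih y hy)
  have hδitY : ∀ j : ℕ, ∀ y ∈ Y, (⇑δ)^[j] y ∈ Y := by
    intro j
    induction j with
    | zero => intro y hy; simpa using hy
    | succ j ih =>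
      intro y hy
      rw [Function.iterate_succ_apply']
      exact hYδ _ (ih y hy)
  have hpitcommγ : ∀ i : ℕ, ∀ y ∈ Y, p^[i] (γ y) = γ (p^[i] y) := by
    intro i
    induction i with
    | zero => intro y hy; simp
    | succ i ih =>
      intro y hy
      rw [Function.iterate_succ_apply', Function.iterate_succ_apply', ih y hy]
      exact hpcommγ _ (hpitY i y hy)
  have hpitcommδs : ∀ i : ℕ, ∀ y ∈ Y, p^[i] (δ.symm y) = δ.symm (p^[i] y) := by
    intro i
    induction i with
    | zero => intro y hy; simp
    | succ i ih =>
      intro y hy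
      rw [Function.iterate_succ_apply', Function.iterate_succ_apply', ih y hy]
      exact hpcommδs _ (hpitY i y hy)
  have hpγit : ∀ i j : ℕ, ∀ w ∈ Y, p^[i] ((⇑γ)^[j] w) = (⇑γ)^[j] (p^[i] w) := by
    intro i j
    induction j with
    | zero => intro w hw; simp
    | succ j ih =>
      intro w hw
      rw [Function.iterate_succ_apply' (⇑γ) j w,
        hpitcommγ i _ (hγitY j w hw), ih w hw,
        ← Function.iterate_succ_apply' (⇑γ) j (p^[i] w)]
  have hpδsit : ∀ i j : ℕ, ∀ w ∈ Y, p^[i] ((⇑δ.symm)^[j] w) = (⇑δ.symm)^[j] (p^[i] w) := by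
    intro i j
    induction j with
    | zero => intro w hw; simp
    | succ j ih =>
      intro w hw
      rw [Function.iterate_succ_apply' (⇑δ.symm) j w,
        hpitcommδs i _ (hδsitY j w hw), ih w hw,
        ← Function.iterate_succ_apply' (⇑δ.symm) j (p^[i] w)]
  have hδsγit : ∀ j : ℕ, ∀ z : E, δ.symm ((⇑γ)^[j] z) = (⇑γ)^[j] (δ.symm z) := by
    intro j
    induction j with
    | zero => intro z; simp
    | succ j ih =>
      intro z
      rw [Function.iterate_succ_apply' (⇑γ) j z, hδsγ, ih z,
        ← Function.iterate_succ_apply' (⇑γ) j (δ.symm z)]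
  have hδsδit : ∀ i : ℕ, ∀ z : E, (⇑δ.symm)^[i] ((⇑δ)^[i] z) = z := by
    intro i
    induction i with
    | zero => intro z; simp
    | succ i ih =>
      intro z
      rw [Function.iterate_succ_apply' (⇑δ) i z,
        Function.iterate_succ_apply (⇑δ.symm) i (δ ((⇑δ)^[i] z)),
        IsometryEquiv.symm_apply_apply]
      exact ih z
  have hpkit : ∀ j : ℕ, ∀ y ∈ Y, p^[k*j] y = (⇑δ)^[j] y := by
    intro j
    induction j with
    | zero => intro y hy; simp
    | succ j ih =>
      intro y hy
      rw [show k*(j+1) = k*j + k by ring, Function.iterate_add_apply, hpk y hy,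
        ih _ (hYδ y hy), ← Function.iterate_succ_apply]
  -- the finite-order correction of γ on Y
  set q : E → E := fun z => γ (δ.symm (p^[k-1] z)) with hqdef
  have hqY : ∀ y ∈ Y, q y ∈ Y := fun y hy =>
    hYγ _ (hYδs _ (hpitY (k-1) y hy))
  have hqitY : ∀ j : ℕ, ∀ y ∈ Y, q^[j] y ∈ Y := by
    intro j
    induction j with
    | zero => intro y hy; simpa using hy
    | succ j ih =>
      intro y hy
      rw [Function.iterate_succ_apply']
      exact hqY _ (ih y hy)
  have hqiso : ∀ y ∈ Y, ∀ y' ∈ Y, dist (q y) (q y') = dist y y' := by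
    intro y hy y' hy'
    show dist (γ (δ.symm (p^[k-1] y))) (γ (δ.symm (p^[k-1] y'))) = dist y y'
    rw [γ.dist_eq, δ.symm.dist_eq]
    exact hpitiso (k-1) y hy y' hy'
  have hqit : ∀ j : ℕ, ∀ y ∈ Y,
      q^[j] y = (⇑γ)^[j] ((⇑δ.symm)^[j] (p^[j*(k-1)] y)) := by
    intro j
    induction j with
    | zero => intro y hy; simp
    | succ j ih =>
      intro y hy
      have hw1 : p^[j*(k-1)] y ∈ Y := hpitY _ y hy
      have hw2 : (⇑δ.symm)^[j] (p^[j*(k-1)] y) ∈ Y := hδsitY _ _ hw1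
      rw [Function.iterate_succ_apply', ih y hy]
      show γ (δ.symm (p^[k-1] ((⇑γ)^[j] ((⇑δ.symm)^[j] (p^[j*(k-1)] y))))) = _
      rw [hpγit (k-1) j _ hw2, hpδsit (k-1) j _ hw1, hδsγit j,
        ← Function.iterate_add_apply p (k-1) (j*(k-1)) y,
        show k-1 + j*(k-1) = (j+1)*(k-1) by ring,
        ← Function.iterate_succ_apply' (⇑δ.symm) j,
        ← Function.iterate_succ_apply' (⇑γ) j]
  have hqk : ∀ y ∈ Y, q^[k] y = y := by
    intro y hy
    rw [hqit k y hy, hpkit (k-1) y hy]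
    have e1 : (1:ℕ) + (k-1) = k := by omega
    have e2 : (⇑δ.symm)^[k] ((⇑δ)^[k-1] y) = δ.symm y := by
      have e2' : (⇑δ.symm)^[1 + (k-1)] ((⇑δ)^[k-1] y) = δ.symm y := by
        rw [Function.iterate_add_apply, hδsδit]
        simp
      rwa [e1] at e2'
    rw [e2, ← hpow k (δ.symm y), ← hδdef, IsometryEquiv.apply_symm_apply]
  -- circumcenter of the finite q-orbit of x₀
  set S : Finset E := (Finset.range k).image (fun j => q^[j] x₀) with hSdef
  have hSne : S.Nonempty :=
    ⟨x₀, by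
      rw [hSdef]
      exact Finset.mem_image.mpr ⟨0, Finset.mem_range.mpr hk, rfl⟩⟩
  have hSY : ∀ s ∈ S, s ∈ Y := by
    intro s hs
    rw [hSdef] at hs
    obtain ⟨j, _, rfl⟩ := Finset.mem_image.mp hs
    exact hqitY j x₀ hx₀Y
  obtain ⟨c, hcY, hcmin, hcuniq⟩ := circumcenter hE Y hYclosed hYmid ⟨x₀, hx₀Y⟩ S hSne
  have hfix : q c = c := by
    refine hcuniq (q c) (hqY c hcY) ?_
    apply Finset.sup'_le
    intro s hs
    rw [hSdef] at hs
    obtain ⟨j, hj, rfl⟩ := Finset.mem_image.mp hs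
    have hj' : j < k := Finset.mem_range.mp hj
    rcases Nat.eq_zero_or_pos j with hj0 | hjpos
    · subst hj0
      have e : q^[0] x₀ = q (q^[k-1] x₀) := by
        have e' : q^[k] x₀ = q (q^[k-1] x₀) := by
          conv_lhs => rw [show k = (k-1)+1 by omega]
          rw [Function.iterate_succ_apply']
        rw [← e', hqk x₀ hx₀Y]
        simp
      rw [e, hqiso c hcY _ (hqitY (k-1) x₀ hx₀Y)]
      refine Finset.le_sup' (fun s => dist c s) ?_
      rw [hSdef]
      exact Finset.mem_image.mpr ⟨k-1, Finset.mem_range.mpr (by omega), rfl⟩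
    · have e : q^[j] x₀ = q (q^[j-1] x₀) := by
        conv_lhs => rw [show j = (j-1)+1 by omega]
        rw [Function.iterate_succ_apply']
      rw [e, hqiso c hcY _ (hqitY (j-1) x₀ hx₀Y)]
      refine Finset.le_sup' (fun s => dist c s) ?_
      rw [hSdef]
      exact Finset.mem_image.mpr ⟨j-1, Finset.mem_range.mpr (by omega), rfl⟩
  -- unwind the fixed point
  set w : E := δ.symm (p^[k-1] c) with hwdef
  have hwY : w ∈ Y := hYδs _ (hpitY (k-1) c hcY)
  have hγw : γ w = c := hfix
  have hdistw : dist (γ w) w = L / k := by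
    rw [hγw, hwdef]
    have e1 : dist c (δ.symm (p^[k-1] c)) = dist (δ c) (p^[k-1] c) := by
      rw [← δ.dist_eq c (δ.symm (p^[k-1] c)), IsometryEquiv.apply_symm_apply]
    rw [e1, ← hpk c hcY]
    have e2 : p^[k] c = p (p^[k-1] c) := by
      conv_lhs => rw [show k = (k-1)+1 by omega]
      rw [Function.iterate_succ_apply']
    rw [e2]
    have hzY' : p^[k-1] c ∈ Y := hpitY (k-1) c hcY
    show dist (σ (p^[k-1] c) (1/(k:ℝ))) (p^[k-1] c) = L / k
    have e3 := hσdY _ hzY' (1/(k:ℝ)) hinvk 0 ⟨le_rfl, by norm_num⟩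
    rw [hσ0] at e3
    rw [e3, sub_zero, abs_of_nonneg (by positivity)]
    ring
  -- conclude
  have hgen : ∀ n : ℕ, ∀ z : E, dist ((γ^n) z) z ≤ n * dist (γ z) z := by
    intro n
    induction n with
    | zero => intro z; simp
    | succ n ih =>
      intro z
      rw [pow_succ, IsometryEquiv.mul_apply]
      have h1 := ih (γ z)
      have h2 : dist (γ (γ z)) (γ z) = dist (γ z) z := γ.dist_eq (γ z) z
      calc dist ((γ^n) (γ z)) z
          ≤ dist ((γ^n) (γ z)) (γ z) + dist (γ z) z := dist_triangle _ _ _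
        _ ≤ n * dist (γ z) z + dist (γ z) z := by rw [h2] at h1; linarith
        _ = ((n+1:ℕ):ℝ) * dist (γ z) z := by push_cast; ring
  have hlb : ∀ z : E, L / k ≤ dist (γ z) z := by
    intro z
    have h1 := hLle z
    have h2 : dist (δ z) z ≤ k * dist (γ z) z := by
      rw [hδdef]
      exact hgen k z
    rw [div_le_iff₀ hkR]
    calc L ≤ dist (δ z) z := h1
      _ ≤ k * dist (γ z) z := h2
      _ = dist (γ z) z * k := by ring
  have htL : transLen γ = L / k := by
    refine le_antisymm ?_ (le_ciInf hlb)
    have h1 : transLen γ ≤ dist (γ w) w :=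
      ciInf_le ⟨0, by rintro _ ⟨v, rfl⟩; exact dist_nonneg⟩ w
    rwa [hdistw] at h1
  exact ⟨w, by rw [hdistw, htL]⟩

lemma req_of_sq_eq_sq {a b : ℝ} (ha : 0 ≤ a) (hb : 0 ≤ b) (h : a ^ 2 = b ^ 2) : a = b :=
  le_antisymm (rle_of_sq_le_sq ha hb h.le) (rle_of_sq_le_sq hb ha h.ge)

lemma dist_sq_piLp {X : Type*} [MetricSpace X] {n : ℕ} (f g : PiLp 2 fun _ : Fin n => X) :
    dist f g ^ 2 = ∑ i, dist (f i) (g i) ^ 2 := by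
  have h := PiLp.dist_eq_sum (p := 2) (by norm_num) f g
  have h2 : ((2:ENNReal)).toReal = (2:ℝ) := by norm_num
  rw [h2] at h
  have hS : (0:ℝ) ≤ ∑ i, dist (f i) (g i) ^ (2:ℝ) := by
    apply Finset.sum_nonneg
    intro i _
    positivity
  have hconv : ∀ i : Fin n, dist (f i) (g i) ^ (2:ℝ) = dist (f i) (g i) ^ (2:ℕ) := by
    intro i
    rw [show (2:ℝ) = ((2:ℕ):ℝ) by norm_num, Real.rpow_natCast]
  rw [h, ← Real.rpow_natCast _ 2, ← Real.rpow_mul hS]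
  norm_num

lemma prod_cat0 {X : Type*} [MetricSpace X] (hX : IsCAT0 X) (n : ℕ) :
    IsCAT0 (PiLp 2 fun _ : Fin n => X) := by
  intro f g
  choose m hm1 hm2 hmcn using hX
  refine ⟨(WithLp.toLp 2 (fun i => m (f i) (g i)) : PiLp 2 fun _ : Fin n => X), ?_, ?_, ?_⟩
  · apply req_of_sq_eq_sq dist_nonneg (by positivity)
    rw [dist_sq_piLp]
    have hterm : ∀ i : Fin n,
        dist (f i) ((WithLp.toLp 2 (fun i => m (f i) (g i)) : PiLp 2 fun _ : Fin n => X) i) ^ 2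
          = dist (f i) (g i) ^ 2 / 4 := by
      intro i
      show dist (f i) (m (f i) (g i)) ^ 2 = dist (f i) (g i) ^ 2 / 4
      rw [hm1]
      ring
    rw [Finset.sum_congr rfl fun i _ => hterm i, ← Finset.sum_div, ← dist_sq_piLp]
    ring
  · apply req_of_sq_eq_sq dist_nonneg (by positivity)
    rw [dist_sq_piLp]
    have hterm : ∀ i : Fin n,
        dist (g i) ((WithLp.toLp 2 (fun i => m (f i) (g i)) : PiLp 2 fun _ : Fin n => X) i) ^ 2
          = dist (f i) (g i) ^ 2 / 4 := by
      intro i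
      show dist (g i) (m (f i) (g i)) ^ 2 = dist (f i) (g i) ^ 2 / 4
      rw [hm2]
      ring
    rw [Finset.sum_congr rfl fun i _ => hterm i, ← Finset.sum_div, ← dist_sq_piLp]
    ring
  · intro z
    rw [dist_sq_piLp, dist_sq_piLp, dist_sq_piLp, dist_sq_piLp]
    have hterm : ∀ i ∈ Finset.univ,
        dist (z i) ((WithLp.toLp 2 (fun i => m (f i) (g i)) : PiLp 2 fun _ : Fin n => X) i) ^ 2
          ≤ (dist (z i) (f i) ^ 2 + dist (z i) (g i) ^ 2) / 2 - dist (f i) (g i) ^ 2 / 4 :=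
      fun i _ => hmcn (f i) (g i) (z i)
    calc ∑ i, dist (z i) ((WithLp.toLp 2 (fun i => m (f i) (g i)) : PiLp 2 fun _ : Fin n => X) i) ^ 2
        ≤ ∑ i, ((dist (z i) (f i) ^ 2 + dist (z i) (g i) ^ 2) / 2
            - dist (f i) (g i) ^ 2 / 4) := Finset.sum_le_sum hterm
      _ = (∑ i, dist (z i) (f i) ^ 2 + ∑ i, dist (z i) (g i) ^ 2) / 2
            - (∑ i, dist (f i) (g i) ^ 2) / 4 := by
          rw [Finset.sum_sub_distrib, ← Finset.sum_div, Finset.sum_add_distrib,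
            ← Finset.sum_div]


/-- If a power of an isometry `g` of the ℓ²-product `Xⁿ` of a complete CAT(0)
space preserves the factors and acts semisimply in each, then `g` is semisimple. -/
theorem semisimple_of_pow_factorwise {X : Type*} [MetricSpace X] [CompleteSpace X]
    (hX : IsCAT0 X) (n : ℕ)
    (g : (PiLp 2 fun _ : Fin n => X) ≃ᵢ (PiLp 2 fun _ : Fin n => X))
    (k : ℕ) (hk : 0 < k) (ψ : Fin n → (X ≃ᵢ X))
    (hfact : ∀ (f : PiLp 2 fun _ : Fin n => X) (i : Fin n), (g ^ k) f i = ψ i (f i))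
    (hss : ∀ i, IsSemisimple (ψ i)) :
    IsSemisimple g := by
  classical
  haveI : CompleteSpace (PiLp 2 fun _ : Fin n => X) := by
    infer_instance
  have hE : IsCAT0 (PiLp 2 fun _ : Fin n => X) := prod_cat0 hX n
  set x : PiLp 2 fun _ : Fin n => X := WithLp.toLp 2 (fun i => (hss i).choose) with hxdef
  haveI : Nonempty (PiLp 2 fun _ : Fin n => X) := ⟨x⟩
  have hxs : ∀ i, dist (ψ i (x i)) (x i) = transLen (ψ i) := fun i => (hss i).choose_spec
  have hti : ∀ (i : Fin n) (z : X), transLen (ψ i) ≤ dist (ψ i z) z := by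
    intro i z
    exact ciInf_le ⟨0, by rintro _ ⟨v, rfl⟩; exact dist_nonneg⟩ z
  have ht0 : ∀ i : Fin n, 0 ≤ transLen (ψ i) := by
    intro i
    rw [← hxs i]
    exact dist_nonneg
  have hgk : ∀ f : PiLp 2 fun _ : Fin n => X,
      dist ((g^k) f) f ^ 2 = ∑ i, dist (ψ i (f i)) (f i) ^ 2 := by
    intro f
    rw [dist_sq_piLp]
    exact Finset.sum_congr rfl fun i _ => by rw [hfact f i]
  have hmin : ∀ f : PiLp 2 fun _ : Fin n => X, dist ((g^k) x) x ≤ dist ((g^k) f) f := by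
    intro f
    apply rle_of_sq_le_sq dist_nonneg dist_nonneg
    rw [hgk, hgk]
    apply Finset.sum_le_sum
    intro i _
    have h1 := hti i (f i)
    have h2 := hxs i
    have h3 := ht0 i
    nlinarith [dist_nonneg (x := ψ i (f i)) (y := f i)]
  have hmin' : dist ((g^k) x) x = transLen (g^k) := by
    refine le_antisymm (le_ciInf hmin) ?_
    exact ciInf_le ⟨0, by rintro _ ⟨v, rfl⟩; exact dist_nonneg⟩ x
  exact cat0_semisimple_of_pow_min hE g k hk x hmin'
end

section
/- Let G be a group with a finite-index central subgroup Z such that G/Z acts properly by isometries on a metric space Y. If a group Γ contains G/Z as a subgroup of finite index n, then the induced action of Γ on Yⁿ is proper. -/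
open Metric Bornology

/-- If `G` has a finite-index central subgroup `Z` and `G ⧸ Z` acts properly by
isometries on `Y`, and `Γ` contains (a copy of) `G ⧸ Z` as a subgroup `H` of
finite index `n`, then the induced action of `Γ` on `Yⁿ` is proper. -/
theorem induced_action_proper {Y : Type*} [MetricSpace Y]
    {G : Type*} [Group G] (Z : Subgroup G) (hZc : Z ≤ Subgroup.center G)
    (hZfi : Z.FiniteIndex) [Z.Normal]
    {Γ : Type*} [Group Γ] (H : Subgroup Γ) (n : ℕ) (hn : 0 < n) (hidx : H.index = n)
    (e : H ≃* (G ⧸ Z))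
    (ρQ : (G ⧸ Z) →* (Y ≃ᵢ Y)) (hproper : IsProperAction ρQ)
    (t : Fin n → Γ) (hreps : ∀ g : Γ, ∃! i : Fin n, ∃ h ∈ H, g = h * t i)
    (ρΓ : Γ →* ((Fin n → Y) ≃ᵢ (Fin n → Y)))
    (hind : ∀ (g : Γ) (i : Fin n), ∃ (j : Fin n) (h : Γ) (hh : h ∈ H),
        t i * g = h * t j ∧ ∀ F : Fin n → Y, ρΓ g F i = ρQ (e ⟨h, hh⟩) (F j)) :
    IsProperAction ρΓ := by
  intro B hB
  set B' : Set Y := ⋃ i : Fin n, (fun F : Fin n → Y => F i) '' B with hB'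
  have hB'b : IsBounded B' := by
    rw [hB', isBounded_iUnion]
    intro i
    exact ((LipschitzWith.eval i).isBounded_image hB)
  have hS : {q : G ⧸ Z | ∃ b ∈ B', ρQ q b ∈ B'}.Finite := hproper B' hB'b
  set i0 : Fin n := ⟨0, hn⟩
  apply Set.Finite.subset
    (Set.Finite.biUnion hS (fun q _ => Set.finite_iUnion (fun j : Fin n =>
      Set.finite_singleton ((t i0)⁻¹ * ((e.symm q : H) : Γ) * t j))))
  rintro g ⟨F, hF, hgF⟩
  obtain ⟨j, h, hh, heq, hFeq⟩ := hind g i0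
  have hFj : F j ∈ B' := Set.mem_iUnion.2 ⟨j, ⟨F, hF, rfl⟩⟩
  have hq : (e ⟨h, hh⟩ : G ⧸ Z) ∈ {q : G ⧸ Z | ∃ b ∈ B', ρQ q b ∈ B'} := by
    refine ⟨F j, hFj, ?_⟩
    rw [← hFeq F]
    exact Set.mem_iUnion.2 ⟨i0, ⟨ρΓ g F, hgF, rfl⟩⟩
  refine Set.mem_biUnion hq (Set.mem_iUnion.2 ⟨j, ?_⟩)
  simp only [Set.mem_singleton_iff, MulEquiv.symm_apply_apply]
  rw [mul_assoc, ← heq, inv_mul_cancel_left]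
end
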